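/- arXiv:2304.10002 — 10 statements merged into one kernel-verified Lean document; each statement's English description precedes it below -/
import Mathlib

section
/- For a generalized highway problem with set of agents N, sections K, cost function C: K → ℝ≥0, and T(i) ⊆ K the set of sections used by agent i (with every section used by someone), the Shapley value of the associated cost game c(S) = Σ_{t ∈ ∪_{i∈S} T(i)} C(t) assigns to each player i the amount Σ_{t ∈ T(i)} C(t)/|N_t|, where N_t = {j ∈ N : t ∈ T(j)}. -/
open Finset

private lemma hockey (r m : ℕ) :
    ∑ s ∈ range (m+1), (r + s).choose r = (r + m + 1).choose (r+1) := by
  induction m with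
  | zero => simp
  | succ m ih =>
    rw [sum_range_succ, ih, show r + (m+1) + 1 = r + m + 1 + 1 by ring,
      Nat.choose_succ_succ (r+m+1) r, Nat.succ_eq_add_one,
      show r + (m+1) = r + m + 1 by ring]
    omega

private lemma nat_id (m k : ℕ) (hk : 0 < k) :
    (∑ s ∈ range (m+1), m.choose s * (s.factorial * (m + k - 1 - s).factorial)) * k
      = (m + k).factorial := by
  have key : ∀ s ∈ range (m+1), m.choose s * (s.factorial * (m + k - 1 - s).factorial)
      = (m.factorial * (k-1).factorial) * (m + k - 1 - s).choose (k-1) := by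
    intro s hs
    rw [mem_range] at hs
    have hsm : s ≤ m := by omega
    have h1 : (k-1) ≤ m + k - 1 - s := by omega
    have h2 : (m + k - 1 - s) - (k-1) = m - s := by omega
    have e1 : (m + k - 1 - s).choose (k-1) * (k-1).factorial * (m - s).factorial
        = (m + k - 1 - s).factorial := by
      have := Nat.choose_mul_factorial_mul_factorial h1
      rwa [h2] at this
    have e2 : m.choose s * s.factorial * (m - s).factorial = m.factorial :=
      Nat.choose_mul_factorial_mul_factorial hsm
    have hpos : 0 < (m - s).factorial := Nat.factorial_pos _
    apply Nat.eq_of_mul_eq_mul_right hpos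
    calc m.choose s * (s.factorial * (m+k-1-s).factorial) * (m-s).factorial
        = (m.choose s * s.factorial * (m-s).factorial) * (m+k-1-s).factorial := by ring
      _ = m.factorial * ((m+k-1-s).choose (k-1) * (k-1).factorial * (m-s).factorial) := by
          rw [e2, e1]
      _ = m.factorial * (k-1).factorial * (m+k-1-s).choose (k-1) * (m-s).factorial := by ring
  rw [Finset.sum_congr rfl key, ← Finset.mul_sum]
  have hrefl : ∑ s ∈ range (m+1), (m + k - 1 - s).choose (k-1)
      = ∑ s ∈ range (m+1), ((k-1) + s).choose (k-1) := by
    rw [← Finset.sum_range_reflect]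
    apply Finset.sum_congr rfl
    intro j hj
    rw [mem_range] at hj
    congr 1
    omega
  rw [hrefl, hockey]
  have hk1 : k - 1 + m + 1 = m + k := by omega
  have hck : (k-1) + 1 = k := by omega
  rw [hk1, hck]
  have h3 : k ≤ m + k := by omega
  have hc := Nat.choose_mul_factorial_mul_factorial h3
  rw [show m + k - k = m by omega] at hc
  have hkf : k * (k-1).factorial = k.factorial := Nat.mul_factorial_pred hk.ne'
  calc m.factorial * (k-1).factorial * ((m+k).choose k) * k
      = (m+k).choose k * (k * (k-1).factorial) * m.factorial := by ring
    _ = (m+k).choose k * k.factorial * m.factorial := by rw [hkf]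
    _ = (m+k).factorial := hc

private lemma weight_sum {α : Type*} [DecidableEq α] (A : Finset α) (n k : ℕ) (hk : 0 < k)
    (hkn : k ≤ n) (hcard : A.card = n - k) :
    ∑ S ∈ A.powerset,
      ((S.card.factorial : ℝ) * ((n - S.card - 1).factorial : ℝ) / (n.factorial : ℝ))
      = 1 / k := by
  set m := n - k with hm
  have hn : n = m + k := by omega
  rw [Finset.sum_powerset_apply_card
    (f := fun j => ((j.factorial : ℝ) * ((n - j - 1).factorial : ℝ) / (n.factorial : ℝ))), hcard]
  have keyR : (∑ j ∈ range (m+1), (m.choose j : ℝ) * ((j.factorial : ℝ) * ((m+k-1-j).factorial : ℝ))) * k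
      = ((m+k).factorial : ℝ) := by
    have := nat_id m k hk
    push_cast [← this]
    ring
  have hstep : ∀ j ∈ range (m+1),
      (m.choose j) • ((j.factorial : ℝ) * ((n - j - 1).factorial : ℝ) / (n.factorial : ℝ))
      = (m.choose j : ℝ) * ((j.factorial : ℝ) * ((m+k-1-j).factorial : ℝ)) / (n.factorial : ℝ) := by
    intro j hj
    rw [mem_range] at hj
    rw [nsmul_eq_mul, show n - j - 1 = m + k - 1 - j by omega]
    ring
  rw [Finset.sum_congr rfl hstep, ← Finset.sum_div]
  have hnf : (0:ℝ) < (n.factorial : ℝ) := by exact_mod_cast Nat.factorial_pos n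
  have hkR : (0:ℝ) < (k:ℝ) := by exact_mod_cast hk
  rw [div_eq_div_iff hnf.ne' hkR.ne', one_mul, hn, keyR]

/-- In a generalized highway problem, the Shapley value of the
associated cost game assigns to player `i` the amount `∑_{t ∈ T(i)} C(t)/|N_t|`. -/
theorem shapley_value_generalized_highway
    {N K : Type*} [Fintype N] [DecidableEq N] [Fintype K] [DecidableEq K]
    (C : K → ℝ) (hC : ∀ t, 0 ≤ C t)
    (T : N → Finset K) (hT : ∀ i, (T i).Nonempty)
    (hK : ∀ t : K, ∃ i, t ∈ T i)
    (c : Finset N → ℝ) (hc : ∀ S : Finset N, c S = ∑ t ∈ S.biUnion T, C t)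
    (i : N) :
    (∑ S ∈ ((Finset.univ : Finset N).erase i).powerset,
        ((Nat.factorial S.card * Nat.factorial (Fintype.card N - S.card - 1) : ℝ) /
            (Nat.factorial (Fintype.card N) : ℝ)) * (c (insert i S) - c S))
      = ∑ t ∈ T i, C t / (((Finset.univ : Finset N).filter (fun j => t ∈ T j)).card : ℝ) := by
  classical
  set n := Fintype.card N with hn
  have hmarg : ∀ S : Finset N, c (insert i S) - c S
      = ∑ t ∈ T i, if t ∈ S.biUnion T then 0 else C t := by
    intro S
    rw [hc, hc, Finset.biUnion_insert,
      ← Finset.sum_sdiff ((Finset.subset_union_right : S.biUnion T ⊆ T i ∪ S.biUnion T)),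
      add_sub_cancel_right, Finset.union_sdiff_right, Finset.sdiff_eq_filter,
      Finset.sum_filter]
    exact Finset.sum_congr rfl fun t _ => by by_cases h : t ∈ S.biUnion T <;> simp [h]
  have hswap :
      (∑ S ∈ ((Finset.univ : Finset N).erase i).powerset,
        ((Nat.factorial S.card * Nat.factorial (n - S.card - 1) : ℝ) /
            (Nat.factorial n : ℝ)) * (c (insert i S) - c S))
      = ∑ t ∈ T i, ∑ S ∈ ((Finset.univ : Finset N).erase i).powerset,
          (if t ∈ S.biUnion T then 0 else
            ((Nat.factorial S.card * Nat.factorial (n - S.card - 1) : ℝ) /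
              (Nat.factorial n : ℝ)) * C t) := by
    rw [Finset.sum_comm]
    refine Finset.sum_congr rfl fun S _ => ?_
    rw [hmarg S, Finset.mul_sum]
    refine Finset.sum_congr rfl fun t _ => ?_
    by_cases h : t ∈ S.biUnion T <;> simp [h]
  rw [hswap]
  refine Finset.sum_congr rfl fun t ht => ?_
  set Nt := (Finset.univ : Finset N).filter (fun j => t ∈ T j) with hNt
  set k := Nt.card with hk
  have hiNt : i ∈ Nt := by simp [hNt, ht]
  have hkpos : 0 < k := Finset.card_pos.2 ⟨i, hiNt⟩
  have hkn : k ≤ n := by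
    rw [hk, hn, ← Finset.card_univ]
    exact Finset.card_le_card (Finset.subset_univ _)
  set A := ((Finset.univ : Finset N).erase i) \ Nt with hA
  have hAeq : A = (Finset.univ : Finset N) \ Nt := by
    ext j
    simp only [hA, Finset.mem_sdiff, Finset.mem_erase, Finset.mem_univ, and_true, true_and]
    constructor
    · tauto
    · intro hj
      refine ⟨fun h => hj (h ▸ hiNt), hj⟩
  have hAcard : A.card = n - k := by
    rw [hAeq, Finset.card_sdiff_of_subset (Finset.subset_univ _), Finset.card_univ, ← hn, hk]
  have hPow : (((Finset.univ : Finset N).erase i).powerset).filter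
      (fun S => t ∉ S.biUnion T) = A.powerset := by
    ext S
    simp only [Finset.mem_filter, Finset.mem_powerset, hA, Finset.subset_sdiff,
      Finset.disjoint_left, hNt, Finset.mem_filter, Finset.mem_univ, true_and,
      Finset.mem_biUnion, not_exists, not_and]
  have hsplit : (∑ S ∈ ((Finset.univ : Finset N).erase i).powerset,
      (if t ∈ S.biUnion T then 0 else
        ((Nat.factorial S.card * Nat.factorial (n - S.card - 1) : ℝ) /
          (Nat.factorial n : ℝ)) * C t))
      = ∑ S ∈ A.powerset,
        ((Nat.factorial S.card * Nat.factorial (n - S.card - 1) : ℝ) /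
          (Nat.factorial n : ℝ)) * C t := by
    rw [← hPow, Finset.sum_filter]
    refine Finset.sum_congr rfl fun S _ => ?_
    by_cases h : t ∈ S.biUnion T <;> simp [h]
  rw [hsplit]
  have hws := weight_sum A n k hkpos hkn hAcard
  calc ∑ S ∈ A.powerset,
        ((Nat.factorial S.card * Nat.factorial (n - S.card - 1) : ℝ) /
          (Nat.factorial n : ℝ)) * C t
      = (∑ S ∈ A.powerset, ((S.card.factorial : ℝ) * ((n - S.card - 1).factorial : ℝ) /
          (n.factorial : ℝ))) * C t := by rw [Finset.sum_mul]
    _ = (1 / k) * C t := by rw [hws]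
    _ = C t / (k : ℝ) := by ring
end

section
/- For a generalized highway problem whose sections are all shared (|N_t| > 1 for every section t), the lower payoff of each player i in the associated cost game equals c({i}), i.e., m_i(N,c) = min_{S ∋ i} (c(S) − Σ_{j ∈ S\{i}} M_j(N,c)) = Σ_{t ∈ T(i)} C(t). -/
open Finset

/-- If every section of a generalized highway problem is shared
(`|N_t| > 1` for all `t`), then the lower payoff of each player `i`, i.e. the
minimum over coalitions `S ∋ i` of `c(S) − Σ_{j ∈ S\{i}} M_j(N,c)`, equals
`c({i}) = Σ_{t ∈ T(i)} C(t)`. -/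
theorem lower_payoff_generalized_highway_all_shared
    {N K : Type*} [Fintype N] [DecidableEq N] [Fintype K] [DecidableEq K]
    (C : K → ℝ) (hC : ∀ t, 0 ≤ C t)
    (T : N → Finset K) (hT : ∀ i, (T i).Nonempty)
    (hK : ∀ t : K, ∃ i, t ∈ T i)
    (hshared : ∀ t : K, 1 < ((Finset.univ : Finset N).filter (fun j => t ∈ T j)).card)
    (c : Finset N → ℝ) (hc : ∀ S : Finset N, c S = ∑ t ∈ S.biUnion T, C t)
    (i : N) :
    IsLeast {x : ℝ | ∃ S : Finset N, i ∈ S ∧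
        x = c S - ∑ j ∈ S.erase i, (c Finset.univ - c (Finset.univ.erase j))}
      (∑ t ∈ T i, C t) := by
  have hM : ∀ j : N, c Finset.univ - c (Finset.univ.erase j) = 0 := by
    intro j
    have hbi : (Finset.univ.erase j).biUnion T = (Finset.univ : Finset N).biUnion T := by
      apply Finset.Subset.antisymm
      · exact Finset.biUnion_subset_biUnion_of_subset_left T (Finset.erase_subset _ _)
      · intro t ht
        have h1 := hshared t
        obtain ⟨k, hk, hne⟩ : ∃ k ∈ (Finset.univ : Finset N).filter (fun j => t ∈ T j), k ≠ j := by
          by_contra h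
          push_neg at h
          have : ((Finset.univ : Finset N).filter (fun j => t ∈ T j)) ⊆ {j} := by
            intro x hx; simp [h x hx]
          have := Finset.card_le_card this
          simp at this; omega
        simp only [Finset.mem_filter] at hk
        exact Finset.mem_biUnion.2 ⟨k, Finset.mem_erase.2 ⟨hne, Finset.mem_univ k⟩, hk.2⟩
    rw [hc, hc, hbi, sub_self]
  constructor
  · refine ⟨{i}, Finset.mem_singleton_self i, ?_⟩
    rw [hc]
    simp
  · rintro x ⟨S, hiS, rfl⟩
    rw [Finset.sum_congr rfl (fun j _ => hM j), Finset.sum_const, smul_zero, sub_zero, hc]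
    apply Finset.sum_le_sum_of_subset_of_nonneg
    · intro t ht; exact Finset.mem_biUnion.2 ⟨i, hiS, ht⟩
    · intro t _ _; exact hC t
end

section
/- In a generalized highway game with a priori unions, the total Owen-value payment of an alliance a* formed by merging unions 1,…,a (2 ≤ a ≤ A) never exceeds the sum of the Owen-value payments those unions received before merging: Ψ_{a*}(N,c,P*) ≤ Σ_{α=1}^{a} Ψ_α(N,c,P). Moreover the inequality is strict if and only if some section is used by at least two of the merging unions and also by at least one union outside the alliance. -/
open Finset

private lemma owen_key (c : ℝ) (hc : 0 < c) (m o : ℕ) (hm : 1 ≤ m) :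
    c / ((o : ℝ) + 1) ≤ (m : ℝ) * c / ((m : ℝ) + (o : ℝ)) ∧
    (c / ((o : ℝ) + 1) < (m : ℝ) * c / ((m : ℝ) + (o : ℝ)) ↔ 2 ≤ m ∧ 1 ≤ o) := by
  have hm' : (1 : ℝ) ≤ (m : ℝ) := by exact_mod_cast hm
  have ho' : (0 : ℝ) ≤ (o : ℝ) := Nat.cast_nonneg o
  have h1 : (0 : ℝ) < (o : ℝ) + 1 := by linarith
  have h2 : (0 : ℝ) < (m : ℝ) + (o : ℝ) := by linarith
  rw [div_le_div_iff₀ h1 h2, div_lt_div_iff₀ h1 h2]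
  constructor
  · nlinarith [mul_nonneg hc.le (mul_nonneg (sub_nonneg.2 hm') ho')]
  · constructor
    · intro h
      by_contra hcon
      push_neg at hcon
      have heq : (m : ℝ) * c * ((o : ℝ) + 1) = c * ((m : ℝ) + (o : ℝ)) := by
        rcases Nat.lt_or_ge m 2 with h' | h'
        · have : m = 1 := by omega
          subst this; push_cast; ring
        · have : o = 0 := by omega
          subst this; push_cast; ring
      linarith
    · rintro ⟨h2m, h1o⟩
      have h2m' : (2 : ℝ) ≤ (m : ℝ) := by exact_mod_cast h2m
      have h1o' : (1 : ℝ) ≤ (o : ℝ) := by exact_mod_cast h1o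
      nlinarith [mul_pos hc (mul_pos (by linarith : (0:ℝ) < (m:ℝ) - 1)
        (by linarith : (0:ℝ) < (o:ℝ)))]

/-- Under the Owen value, merging unions `1,…,a` (of `A`) into an
alliance never increases their total payment, with strict decrease iff some
section is used by at least two merging unions and by a union outside the
alliance.  (Union `b`'s Owen payment is `Σ_{t ∈ T(P_b)} C(t)/|𝒜_t|`.) -/
theorem owen_alliance_beneficial
    {N K : Type*} [Fintype N] [DecidableEq N] [Fintype K] [DecidableEq K]
    (C : K → ℝ) (hC : ∀ t, 0 < C t)
    (T : N → Finset K) (hT : ∀ i, (T i).Nonempty)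
    (hK : ∀ t : K, ∃ i, t ∈ T i)
    (A a : ℕ) (ha2 : 2 ≤ a) (haA : a ≤ A)
    (Pp : Fin A → Finset N)
    (hdis : ∀ b b' : Fin A, b ≠ b' → Disjoint (Pp b) (Pp b'))
    (hcov : ∀ i : N, ∃ b : Fin A, i ∈ Pp b)
    (hne : ∀ b : Fin A, (Pp b).Nonempty) :
    let U : Fin A → Finset K := fun b => (Pp b).biUnion T
    let At : K → ℕ := fun t => ((Finset.univ : Finset (Fin A)).filter (fun b => t ∈ U b)).card
    let B : Finset (Fin A) := Finset.univ.filter (fun b => (b : ℕ) < a)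
    let UA : Finset K := B.biUnion U
    let Ats : K → ℕ := fun t =>
      (Finset.univ.filter (fun b : Fin A => a ≤ (b : ℕ) ∧ t ∈ U b)).card +
        (if t ∈ UA then 1 else 0)
    ((∑ t ∈ UA, C t / (Ats t : ℝ)) ≤ ∑ b ∈ B, ∑ t ∈ U b, C t / (At t : ℝ)) ∧
    ((∑ t ∈ UA, C t / (Ats t : ℝ)) < (∑ b ∈ B, ∑ t ∈ U b, C t / (At t : ℝ)) ↔
      ∃ t : K, 1 < (B.filter (fun b => t ∈ U b)).card ∧
        ∃ b : Fin A, a ≤ (b : ℕ) ∧ t ∈ U b) := by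
  intro U At B UA Ats
  set m : K → ℕ := fun t => (B.filter (fun b => t ∈ U b)).card with hm
  set o : K → ℕ := fun t =>
    (Finset.univ.filter (fun b : Fin A => a ≤ (b : ℕ) ∧ t ∈ U b)).card with ho
  have hsub : ∀ b ∈ B, U b ⊆ UA := fun b hb => subset_biUnion_of_mem U hb
  -- At = m + o
  have hAt : ∀ t, At t = m t + o t := by
    intro t
    have hmsplit : B.filter (fun b => t ∈ U b)
        = Finset.univ.filter (fun b : Fin A => (b : ℕ) < a ∧ t ∈ U b) := by
      simp [B, Finset.filter_filter]
    have hunion : (Finset.univ.filter (fun b : Fin A => t ∈ U b))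
        = (Finset.univ.filter (fun b : Fin A => (b : ℕ) < a ∧ t ∈ U b)) ∪
          (Finset.univ.filter (fun b : Fin A => a ≤ (b : ℕ) ∧ t ∈ U b)) := by
      ext b
      simp only [Finset.mem_filter, Finset.mem_union, Finset.mem_univ, true_and]
      constructor
      · intro h
        rcases Nat.lt_or_ge (b : ℕ) a with h' | h'
        · exact Or.inl ⟨h', h⟩
        · exact Or.inr ⟨h', h⟩
      · rintro (⟨_, h⟩ | ⟨_, h⟩) <;> exact h
    have hdisj : Disjoint
        (Finset.univ.filter (fun b : Fin A => (b : ℕ) < a ∧ t ∈ U b))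
        (Finset.univ.filter (fun b : Fin A => a ≤ (b : ℕ) ∧ t ∈ U b)) := by
      rw [Finset.disjoint_left]
      intro b hb hb'
      simp only [Finset.mem_filter] at hb hb'
      omega
    show (Finset.univ.filter (fun b : Fin A => t ∈ U b)).card = m t + o t
    rw [hunion, Finset.card_union_of_disjoint hdisj]
    simp only [m, o, hmsplit]
  -- membership in UA iff m ≥ 1
  have hmem : ∀ t, t ∈ UA ↔ 1 ≤ m t := by
    intro t
    constructor
    · intro h
      obtain ⟨b, hb, ht⟩ := Finset.mem_biUnion.1 h
      exact Finset.card_pos.2 ⟨b, Finset.mem_filter.2 ⟨hb, ht⟩⟩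
    · intro h
      obtain ⟨b, hb⟩ := Finset.card_pos.1 h
      obtain ⟨hbB, ht⟩ := Finset.mem_filter.1 hb
      exact Finset.mem_biUnion.2 ⟨b, hbB, ht⟩
  -- rewrite the RHS as a weighted sum over UA
  have hswap : ∑ b ∈ B, ∑ t ∈ U b, C t / (At t : ℝ)
      = ∑ t ∈ UA, (m t : ℝ) * (C t / (At t : ℝ)) := by
    have step1 : ∀ b ∈ B, ∑ t ∈ U b, C t / (At t : ℝ)
        = ∑ t ∈ UA, if t ∈ U b then C t / (At t : ℝ) else 0 := by
      intro b hb
      rw [← Finset.sum_filter, Finset.filter_mem_eq_inter,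
        Finset.inter_eq_right.2 (hsub b hb)]
    rw [Finset.sum_congr rfl step1, Finset.sum_comm]
    refine Finset.sum_congr rfl fun t _ => ?_
    rw [← Finset.sum_filter, Finset.sum_const, nsmul_eq_mul]
  -- cast identities for t ∈ UA
  have hAts : ∀ t ∈ UA, (Ats t : ℝ) = (o t : ℝ) + 1 := by
    intro t ht
    show ((o t + if t ∈ UA then 1 else 0 : ℕ) : ℝ) = (o t : ℝ) + 1
    rw [if_pos ht]; push_cast; ring
  have hAtc : ∀ t, (At t : ℝ) = (m t : ℝ) + (o t : ℝ) := by
    intro t; rw [hAt t]; push_cast; ring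
  -- pointwise comparison
  have hle : ∀ t ∈ UA, C t / (Ats t : ℝ) ≤ (m t : ℝ) * (C t / (At t : ℝ)) := by
    intro t ht
    rw [hAts t ht, hAtc t, ← mul_div_assoc]
    exact (owen_key (C t) (hC t) (m t) (o t) ((hmem t).1 ht)).1
  have hlt : ∀ t ∈ UA, (C t / (Ats t : ℝ) < (m t : ℝ) * (C t / (At t : ℝ))
      ↔ 2 ≤ m t ∧ 1 ≤ o t) := by
    intro t ht
    rw [hAts t ht, hAtc t, ← mul_div_assoc]
    exact (owen_key (C t) (hC t) (m t) (o t) ((hmem t).1 ht)).2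
  -- the existence condition
  have hcond : ∀ t, ((1 < m t ∧ ∃ b : Fin A, a ≤ (b : ℕ) ∧ t ∈ U b)
      ↔ (t ∈ UA ∧ 2 ≤ m t ∧ 1 ≤ o t)) := by
    intro t
    constructor
    · rintro ⟨h1, b, hab, hub⟩
      refine ⟨(hmem t).2 (by omega), by omega, ?_⟩
      exact Finset.card_pos.2 ⟨b, Finset.mem_filter.2 ⟨Finset.mem_univ b, hab, hub⟩⟩
    · rintro ⟨htUA, h2, h1⟩
      refine ⟨by omega, ?_⟩
      obtain ⟨b, hb⟩ := Finset.card_pos.1 h1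
      obtain ⟨-, hab, hub⟩ := Finset.mem_filter.1 hb
      exact ⟨b, hab, hub⟩
  rw [hswap]
  constructor
  · exact Finset.sum_le_sum hle
  · constructor
    · intro hstrict
      by_contra hcon
      push_neg at hcon
      have heq : ∀ t ∈ UA, C t / (Ats t : ℝ) = (m t : ℝ) * (C t / (At t : ℝ)) := by
        intro t ht
        refine le_antisymm (hle t ht) (le_of_not_gt fun h => ?_)
        have h2 := (hlt t ht).1 h
        have h3 := (hcond t).2 ⟨ht, h2⟩
        obtain ⟨b, hab, hub⟩ := h3.2
        exact hcon t h3.1 b hab hub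
      rw [Finset.sum_congr rfl heq] at hstrict
      exact lt_irrefl _ hstrict
    · rintro ⟨t, h1, b, hab, hub⟩
      have h := (hcond t).1 ⟨h1, b, hab, hub⟩
      exact Finset.sum_lt_sum hle ⟨t, h.1, (hlt t h.1).2 h.2⟩
end

section
/- Let (N,K,C,T) be a generalized highway problem and c its associated game. If every section is exclusive (|N_t| = 1 for all t), the Tijs value of player i equals c^e(i) = Σ_{t ∈ T^e(i)} C(t). If some section is shared, then the Tijs value of player i equals c^e(i) + c^s(N)·c^s(i)/Σ_{j∈N} c^s(j), where c^e(i) is the total cost of i's exclusive sections, c^s(i) the total cost of i's shared sections, and c^s(N) the total cost of all shared sections. -/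
open Finset

/-- Tijs value of a generalized highway game.  If every section is
exclusive, player `i` receives `c^e(i)`; if some section is shared, player `i`
receives `c^e(i) + c^s(N)·c^s(i)/Σ_j c^s(j)`. -/
theorem tijs_value_generalized_highway
    {N K : Type*} [Fintype N] [DecidableEq N] [Fintype K] [DecidableEq K]
    (C : K → ℝ) (hC : ∀ t, 0 ≤ C t)
    (T : N → Finset K) (hT : ∀ i, (T i).Nonempty)
    (hK : ∀ t : K, ∃ i, t ∈ T i)
    (c : Finset N → ℝ) (hc : ∀ S : Finset N, c S = ∑ t ∈ S.biUnion T, C t)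
    -- utopia payoffs
    (Mv : N → ℝ) (hMv : ∀ i, Mv i = c Finset.univ - c (Finset.univ.erase i))
    -- lower payoffs: minimum over coalitions containing `i`
    (m : N → ℝ)
    (hm : ∀ i, IsLeast {x : ℝ | ∃ S : Finset N, i ∈ S ∧
        x = c S - ∑ j ∈ S.erase i, Mv j} (m i))
    -- the Tijs value: `τ_i = m_i + α(M_i − m_i)` with `α` normalizing to efficiency
    (α : ℝ) (hα0 : 0 ≤ α) (hα1 : α ≤ 1)
    (heff : ∑ i : N, (m i + α * (Mv i - m i)) = c Finset.univ)
    -- exclusive and shared costs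
    (ce cs : N → ℝ)
    (hce : ∀ i, ce i = ∑ t ∈ (T i).filter
        (fun t => ((Finset.univ : Finset N).filter (fun j => t ∈ T j)).card = 1), C t)
    (hcs : ∀ i, cs i = ∑ t ∈ (T i).filter
        (fun t => 1 < ((Finset.univ : Finset N).filter (fun j => t ∈ T j)).card), C t)
    (Ks : Finset K)
    (hKs : Ks = Finset.univ.filter
        (fun t => 1 < ((Finset.univ : Finset N).filter (fun j => t ∈ T j)).card))
    (hden : Ks.Nonempty → 0 < ∑ j : N, cs j) :
    ∀ i : N,
      (Ks = ∅ → m i + α * (Mv i - m i) = ce i) ∧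
      (Ks.Nonempty → m i + α * (Mv i - m i)
          = ce i + (∑ t ∈ Ks, C t) * cs i / ∑ j : N, cs j) := by
  classical
  -- number of users of a section is positive
  have hnt : ∀ t : K, 0 < ((Finset.univ : Finset N).filter (fun j => t ∈ T j)).card := by
    intro t
    obtain ⟨i, hi⟩ := hK t
    exact card_pos.2 ⟨i, mem_filter.2 ⟨mem_univ i, hi⟩⟩
  -- "not exclusive" is the same as "shared"
  have hnotexcl : ∀ s : Finset K,
      s.filter (fun t => ¬ ((Finset.univ : Finset N).filter (fun j => t ∈ T j)).card = 1)
        = s.filter (fun t => 1 < ((Finset.univ : Finset N).filter (fun j => t ∈ T j)).card) := by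
    intro s
    apply filter_congr
    intro t _
    have := hnt t
    constructor <;> intro h <;> omega
  -- exclusive sections of distinct players are disjoint
  have hdisj : ∀ S : Finset N, (↑S : Set N).PairwiseDisjoint
      (fun j => (T j).filter
        (fun t => ((Finset.univ : Finset N).filter (fun j' => t ∈ T j')).card = 1)) := by
    intro S j1 _ j2 _ hne
    simp only [Function.onFun]
    rw [Finset.disjoint_left]
    intro t ht1 ht2
    rw [mem_filter] at ht1 ht2
    have hsub : ({j1, j2} : Finset N) ⊆ (Finset.univ : Finset N).filter (fun j => t ∈ T j) := by
      intro x hx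
      simp only [mem_insert, mem_singleton] at hx
      rcases hx with rfl | rfl
      · exact mem_filter.2 ⟨mem_univ _, ht1.1⟩
      · exact mem_filter.2 ⟨mem_univ _, ht2.1⟩
    have h2 : ({j1, j2} : Finset N).card = 2 := by
      rw [card_insert_of_notMem (by simpa using hne), card_singleton]
    have := Finset.card_le_card hsub
    omega
  -- sum of exclusive costs over a coalition
  have hexcl_sum : ∀ S : Finset N,
      ∑ t ∈ (S.biUnion T).filter
          (fun t => ((Finset.univ : Finset N).filter (fun j => t ∈ T j)).card = 1), C t
        = ∑ j ∈ S, ce j := by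
    intro S
    rw [filter_biUnion, Finset.sum_biUnion (hdisj S)]
    exact Finset.sum_congr rfl fun j _ => (hce j).symm
  have hBuniv : (Finset.univ : Finset N).biUnion T = Finset.univ := by
    ext t; simpa using hK t
  -- the utopia payoff is the exclusive cost
  have hMv' : ∀ i, Mv i = ce i := by
    intro i
    rw [hMv, hc, hc, hBuniv]
    have hsub : (Finset.univ.erase i).biUnion T ⊆ (Finset.univ : Finset K) := subset_univ _
    rw [← Finset.sum_sdiff hsub, add_sub_cancel_right, hce]
    congr 1
    ext t
    simp only [mem_sdiff, mem_univ, true_and, and_true, mem_biUnion, mem_erase, mem_filter,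
      not_exists, not_and]
    constructor
    · intro h
      obtain ⟨j0, hj0⟩ := hK t
      have hji : j0 = i := by
        by_contra hne
        exact h j0 hne hj0
      subst hji
      refine ⟨hj0, ?_⟩
      have : (Finset.univ : Finset N).filter (fun j => t ∈ T j) = {j0} := by
        ext j
        simp only [mem_filter, mem_univ, true_and, mem_singleton]
        constructor
        · intro hj
          by_contra hne
          exact h j hne hj
        · rintro rfl; exact hj0
      rw [this, card_singleton]
    · rintro ⟨hti, hcard⟩ j hji htj
      obtain ⟨a, ha⟩ := Finset.card_eq_one.1 hcard
      have hi : i ∈ (Finset.univ : Finset N).filter (fun j => t ∈ T j) :=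
        mem_filter.2 ⟨mem_univ _, hti⟩
      have hj : j ∈ (Finset.univ : Finset N).filter (fun j => t ∈ T j) :=
        mem_filter.2 ⟨mem_univ _, htj⟩
      rw [ha, mem_singleton] at hi hj
      exact hji (hj.trans hi.symm)
  -- the cost of a singleton coalition
  have hsingle : ∀ i : N, c {i} = ce i + cs i := by
    intro i
    rw [hc, Finset.singleton_biUnion,
      ← Finset.sum_filter_add_sum_filter_not (T i)
        (fun t => ((Finset.univ : Finset N).filter (fun j => t ∈ T j)).card = 1) C,
      hnotexcl, hce, hcs]
  -- the lower payoff
  have hm' : ∀ i, m i = ce i + cs i := by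
    intro i
    have hmem : ce i + cs i ∈ {x : ℝ | ∃ S : Finset N, i ∈ S ∧
        x = c S - ∑ j ∈ S.erase i, Mv j} := by
      exact ⟨{i}, mem_singleton_self i, by simp [Finset.erase_singleton, hsingle i]⟩
    have hlb : ∀ x ∈ {x : ℝ | ∃ S : Finset N, i ∈ S ∧
        x = c S - ∑ j ∈ S.erase i, Mv j}, ce i + cs i ≤ x := by
      rintro x ⟨S, hiS, rfl⟩
      have hMsum : ∑ j ∈ S.erase i, Mv j = ∑ j ∈ S.erase i, ce j :=
        Finset.sum_congr rfl fun j _ => hMv' j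
      have hsplit : c S = (∑ j ∈ S, ce j) +
          ∑ t ∈ (S.biUnion T).filter
            (fun t => 1 < ((Finset.univ : Finset N).filter (fun j => t ∈ T j)).card), C t := by
        rw [hc, ← Finset.sum_filter_add_sum_filter_not (S.biUnion T)
          (fun t => ((Finset.univ : Finset N).filter (fun j => t ∈ T j)).card = 1) C,
          hnotexcl, hexcl_sum]
      have hcsle : cs i ≤ ∑ t ∈ (S.biUnion T).filter
          (fun t => 1 < ((Finset.univ : Finset N).filter (fun j => t ∈ T j)).card), C t := by
        rw [hcs]
        apply Finset.sum_le_sum_of_subset_of_nonneg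
        · intro t ht
          rw [mem_filter] at ht ⊢
          exact ⟨mem_biUnion.2 ⟨i, hiS, ht.1⟩, ht.2⟩
        · intro t _ _; exact hC t
      have hsum : ce i + ∑ j ∈ S.erase i, ce j = ∑ j ∈ S, ce j :=
        Finset.add_sum_erase S ce hiS
      rw [hMsum]
      linarith
    exact le_antisymm ((hm i).2 hmem) (hlb _ (hm i).1)
  -- total cost
  have hcu : c Finset.univ = (∑ i : N, ce i) + ∑ t ∈ Ks, C t := by
    have h1 := hexcl_sum Finset.univ
    rw [hBuniv] at h1
    rw [hc, hBuniv,
      ← Finset.sum_filter_add_sum_filter_not (Finset.univ : Finset K)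
        (fun t => ((Finset.univ : Finset N).filter (fun j => t ∈ T j)).card = 1) C,
      hnotexcl, h1, hKs]
  -- efficiency yields the value of (1-α)·Σ cs
  have hkey : (1 - α) * (∑ j : N, cs j) = ∑ t ∈ Ks, C t := by
    have h2 : ∑ i : N, (m i + α * (Mv i - m i))
        = (∑ i : N, ce i) + (1 - α) * ∑ j : N, cs j := by
      rw [Finset.mul_sum, ← Finset.sum_add_distrib]
      exact Finset.sum_congr rfl fun i _ => by rw [hm' i, hMv' i]; ring
    rw [h2, hcu] at heff
    linarith
  intro i
  constructor
  · intro hempty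
    have hcs0 : cs i = 0 := by
      rw [hcs]
      have hsub : (T i).filter
          (fun t => 1 < ((Finset.univ : Finset N).filter (fun j => t ∈ T j)).card) ⊆ Ks := by
        intro t ht
        rw [hKs, mem_filter]
        exact ⟨mem_univ _, (mem_filter.1 ht).2⟩
      rw [hempty] at hsub
      rw [Finset.subset_empty.1 hsub, Finset.sum_empty]
    rw [hm' i, hMv' i, hcs0]
    ring
  · intro hne
    have hd : (∑ j : N, cs j) ≠ 0 := (hden hne).ne'
    rw [hm' i, hMv' i, ← hkey]
    field_simp
    ring
end

section
/- Let (N,K,C,T) be a generalized highway problem with partition P of N into unions, and (M, c_P) the quotient game. If every section is used by exactly one union, the Tijs value of union a in the quotient game equals c_P^e(a), the total cost of sections used only by union a. Otherwise it equals c_P^e(a) + c_P^s(M)·c_P^s(a)/Σ_{b∈M} c_P^s(b), where c_P^s(a) is the total cost of sections used by union a that are shared with other unions and c_P^s(M) the total cost of all union-shared sections. -/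
open Finset

/-- Tijs value of the quotient game of a generalized highway
problem with a priori unions.  If every section is used by exactly one union,
union `a` receives `c_P^e(a)`; otherwise it receives
`c_P^e(a) + c_P^s(M)·c_P^s(a)/Σ_b c_P^s(b)`. -/
theorem tijs_value_quotient_generalized_highway
    {N K M : Type*} [Fintype N] [DecidableEq N] [Fintype K] [DecidableEq K]
    [Fintype M] [DecidableEq M]
    (C : K → ℝ) (hC : ∀ t, 0 ≤ C t)
    (T : N → Finset K) (hT : ∀ i, (T i).Nonempty)
    (hK : ∀ t : K, ∃ i, t ∈ T i)
    (c : Finset N → ℝ) (hc : ∀ S : Finset N, c S = ∑ t ∈ S.biUnion T, C t)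
    (Pp : M → Finset N)
    (hdis : ∀ a b : M, a ≠ b → Disjoint (Pp a) (Pp b))
    (hcov : ∀ i : N, ∃ a : M, i ∈ Pp a)
    (hne : ∀ a : M, (Pp a).Nonempty)
    -- the quotient game
    (cP : Finset M → ℝ) (hcP : ∀ H : Finset M, cP H = c (H.biUnion Pp))
    -- utopia payoffs of the quotient game
    (MU : M → ℝ) (hMU : ∀ b, MU b = cP Finset.univ - cP (Finset.univ.erase b))
    -- lower payoffs of the quotient game
    (mU : M → ℝ)
    (hmU : ∀ b, IsLeast {x : ℝ | ∃ H : Finset M, b ∈ H ∧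
        x = cP H - ∑ b' ∈ H.erase b, MU b'} (mU b))
    -- the Tijs value of the quotient game
    (α : ℝ) (hα0 : 0 ≤ α) (hα1 : α ≤ 1)
    (heff : ∑ b : M, (mU b + α * (MU b - mU b)) = cP Finset.univ)
    -- exclusive and shared costs at union level
    (cPe cPs : M → ℝ)
    (hcPe : ∀ b, cPe b = ∑ t ∈ ((Pp b).biUnion T).filter
        (fun t => ((Finset.univ : Finset M).filter
          (fun b' => t ∈ (Pp b').biUnion T)).card = 1), C t)
    (hcPs : ∀ b, cPs b = ∑ t ∈ ((Pp b).biUnion T).filter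
        (fun t => 1 < ((Finset.univ : Finset M).filter
          (fun b' => t ∈ (Pp b').biUnion T)).card), C t)
    (KPs : Finset K)
    (hKPs : KPs = Finset.univ.filter
        (fun t => 1 < ((Finset.univ : Finset M).filter
          (fun b' => t ∈ (Pp b').biUnion T)).card))
    (hden : KPs.Nonempty → 0 < ∑ b : M, cPs b) :
    ∀ a : M,
      (KPs = ∅ → mU a + α * (MU a - mU a) = cPe a) ∧
      (KPs.Nonempty → mU a + α * (MU a - mU a)
          = cPe a + (∑ t ∈ KPs, C t) * cPs a / ∑ b : M, cPs b) := by
  classical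
  set U : M → Finset K := fun b => (Pp b).biUnion T with hU
  set n : K → ℕ := fun t => (Finset.univ.filter (fun b' => t ∈ U b')).card with hn
  have hcPe' : ∀ b, cPe b = ∑ t ∈ (U b).filter (fun t => n t = 1), C t := hcPe
  have hcPs' : ∀ b, cPs b = ∑ t ∈ (U b).filter (fun t => 1 < n t), C t := hcPs
  have hKPs' : KPs = Finset.univ.filter (fun t => 1 < n t) := hKPs
  have hUall : ∀ t : K, ∃ b, t ∈ U b := by
    intro t
    obtain ⟨i, hi⟩ := hK t
    obtain ⟨a, ha⟩ := hcov i
    exact ⟨a, Finset.mem_biUnion.2 ⟨i, ha, hi⟩⟩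
  have hn1 : ∀ t, 1 ≤ n t := by
    intro t
    obtain ⟨b, hb⟩ := hUall t
    have hmem : b ∈ Finset.univ.filter (fun b' => t ∈ U b') := by
      simp [hb]
    simpa [hn] using Finset.card_pos.2 ⟨b, hmem⟩
  have huniq : ∀ t b b', n t = 1 → t ∈ U b → t ∈ U b' → b = b' := by
    intro t b b' h1 hb hb'
    have h1' : (Finset.univ.filter (fun b' => t ∈ U b')).card = 1 := h1
    obtain ⟨x, hx⟩ := Finset.card_eq_one.1 h1'
    have hbx : b ∈ Finset.univ.filter (fun b'' => t ∈ U b'') := by simp [hb]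
    have hb'x : b' ∈ Finset.univ.filter (fun b'' => t ∈ U b'') := by simp [hb']
    rw [hx, Finset.mem_singleton] at hbx hb'x
    rw [hbx, hb'x]
  have hbiU : ∀ H : Finset M, cP H = ∑ t ∈ H.biUnion U, C t := by
    intro H
    rw [hcP, hc]
    congr 1
    ext t
    simp only [Finset.mem_biUnion]
    constructor
    · rintro ⟨i, ⟨a, haH, hia⟩, hti⟩
      exact ⟨a, haH, Finset.mem_biUnion.2 ⟨i, hia, hti⟩⟩
    · rintro ⟨a, haH, ht⟩
      obtain ⟨i, hia, hti⟩ := Finset.mem_biUnion.1 ht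
      exact ⟨i, ⟨a, haH, hia⟩, hti⟩
  have hUuniv : (Finset.univ : Finset M).biUnion U = Finset.univ := by
    ext t
    simp only [Finset.mem_biUnion, Finset.mem_univ, true_and, iff_true]
    exact hUall t
  have hcPuniv : cP Finset.univ = ∑ t, C t := by rw [hbiU, hUuniv]
  have hdisE : ∀ b b' : M, b ≠ b' →
      Disjoint ((U b).filter (fun t => n t = 1)) ((U b').filter (fun t => n t = 1)) := by
    intro b b' hbb
    rw [Finset.disjoint_left]
    intro t ht ht'
    simp only [Finset.mem_filter] at ht ht'
    exact hbb (huniq t b b' ht.2 ht.1 ht'.1)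
  have hEsum : ∀ H : Finset M,
      ∑ t ∈ (H.biUnion U).filter (fun t => n t = 1), C t = ∑ b ∈ H, cPe b := by
    intro H
    rw [Finset.filter_biUnion, Finset.sum_biUnion]
    · exact Finset.sum_congr rfl (fun b _ => (hcPe' b).symm)
    · intro b _ b' _ hbb
      exact hdisE b b' hbb
  have hsplit : ∀ s : Finset K, ∑ t ∈ s, C t
      = ∑ t ∈ s.filter (fun t => n t = 1), C t
        + ∑ t ∈ s.filter (fun t => 1 < n t), C t := by
    intro s
    rw [← Finset.sum_filter_add_sum_filter_not s (fun t => n t = 1)]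
    congr 1
    apply Finset.sum_congr _ (fun _ _ => rfl)
    apply Finset.filter_congr
    intro t _
    have := hn1 t
    constructor
    · intro h; omega
    · intro h; omega
  have hMUe : ∀ b, MU b = cPe b := by
    intro b
    have hsub : (Finset.univ.erase b).biUnion U ⊆ Finset.univ := Finset.subset_univ _
    have hset : Finset.univ \ (Finset.univ.erase b).biUnion U
        = (U b).filter (fun t => n t = 1) := by
      ext t
      constructor
      · intro ht
        have hnot : t ∉ (Finset.univ.erase b).biUnion U := (Finset.mem_sdiff.1 ht).2
        have htb : t ∈ U b := by
          obtain ⟨b0, hb0⟩ := hUall t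
          rcases eq_or_ne b0 b with rfl | hne'
          · exact hb0
          · exact absurd (Finset.mem_biUnion.2
              ⟨b0, Finset.mem_erase.2 ⟨hne', Finset.mem_univ _⟩, hb0⟩) hnot
        have hfil : Finset.univ.filter (fun b' => t ∈ U b') = {b} := by
          ext b'
          simp only [Finset.mem_filter, Finset.mem_univ, true_and, Finset.mem_singleton]
          constructor
          · intro hb'
            by_contra hne'
            exact hnot (Finset.mem_biUnion.2
              ⟨b', Finset.mem_erase.2 ⟨hne', Finset.mem_univ _⟩, hb'⟩)
          · rintro rfl; exact htb
        refine Finset.mem_filter.2 ⟨htb, ?_⟩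
        show (Finset.univ.filter (fun b' => t ∈ U b')).card = 1
        rw [hfil]; rfl
      · intro ht
        obtain ⟨htb, h1⟩ := Finset.mem_filter.1 ht
        refine Finset.mem_sdiff.2 ⟨Finset.mem_univ _, ?_⟩
        intro hmem
        obtain ⟨b', hb', htb'⟩ := Finset.mem_biUnion.1 hmem
        exact (Finset.mem_erase.1 hb').1 (huniq t b' b h1 htb' htb)
    rw [hMU b, hcPuniv, hbiU, hcPe' b, ← hset, Finset.sum_sdiff_eq_sub hsub]
  have hsingle : ∀ b, cP ({b} : Finset M) = cPe b + cPs b := by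
    intro b
    rw [hbiU, Finset.singleton_biUnion, hsplit (U b), hcPe', hcPs']
  have hmUval : ∀ b, mU b = cPe b + cPs b := by
    intro b
    obtain ⟨⟨H, hbH, hval⟩, hlb⟩ := hmU b
    have hub : mU b ≤ cPe b + cPs b := by
      refine hlb ⟨{b}, Finset.mem_singleton_self b, ?_⟩
      simp [hsingle b, Finset.erase_singleton]
    have hge : cPe b + cPs b ≤ mU b := by
      rw [hval]
      have h1 : cP H = ∑ b' ∈ H, cPe b'
          + ∑ t ∈ (H.biUnion U).filter (fun t => 1 < n t), C t := by
        rw [hbiU, hsplit, hEsum]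
      have h2 : cPs b ≤ ∑ t ∈ (H.biUnion U).filter (fun t => 1 < n t), C t := by
        rw [hcPs']
        apply Finset.sum_le_sum_of_subset_of_nonneg
        · apply Finset.filter_subset_filter
          intro t ht
          exact Finset.mem_biUnion.2 ⟨b, hbH, ht⟩
        · intro t _ _; exact hC t
      have h3 : ∑ b' ∈ H.erase b, MU b' = (∑ b' ∈ H, cPe b') - cPe b := by
        rw [Finset.sum_congr rfl (fun b' _ => hMUe b'), Finset.sum_erase_eq_sub hbH]
      rw [h1, h3]
      linarith
    exact le_antisymm hub hge
  have hEuniv : ∑ t ∈ Finset.univ.filter (fun t => n t = 1), C t = ∑ b : M, cPe b := by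
    have h := hEsum Finset.univ
    rwa [hUuniv] at h
  have hkey : (1 - α) * ∑ b : M, cPs b = ∑ t ∈ KPs, C t := by
    have h1 : ∑ b : M, (mU b + α * (MU b - mU b))
        = (∑ b : M, cPe b) + (1 - α) * ∑ b : M, cPs b := by
      rw [Finset.mul_sum, ← Finset.sum_add_distrib]
      apply Finset.sum_congr rfl
      intro b _
      rw [hmUval b, hMUe b]
      ring
    have h2 : cP Finset.univ = (∑ b : M, cPe b) + ∑ t ∈ KPs, C t := by
      rw [hcPuniv, hKPs', hsplit Finset.univ, hEuniv]
    rw [h1, h2] at heff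
    linarith
  intro a
  have hval : mU a + α * (MU a - mU a) = cPe a + (1 - α) * cPs a := by
    rw [hmUval a, hMUe a]; ring
  constructor
  · intro hempty
    have hzero : cPs a = 0 := by
      rw [hcPs']
      have hemp : (U a).filter (fun t => 1 < n t) = ∅ := by
        rw [Finset.eq_empty_iff_forall_notMem]
        intro t ht
        have h1 : t ∈ Finset.univ.filter (fun t => 1 < n t) :=
          Finset.mem_filter.2 ⟨Finset.mem_univ t, (Finset.mem_filter.1 ht).2⟩
        rw [← hKPs', hempty] at h1
        exact absurd h1 (Finset.notMem_empty t)
      rw [hemp, Finset.sum_empty]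
    rw [hval, hzero]; ring
  · intro hne'
    have hS : 0 < ∑ b : M, cPs b := hden hne'
    have heq : (1 - α) * cPs a = (∑ t ∈ KPs, C t) * cPs a / ∑ b : M, cPs b := by
      rw [← hkey]
      field_simp
    rw [hval, heq]
end

section
/- Let (N,K,C,T,P) be a generalized highway problem with a priori unions in which every section is shared (|N_t| > 1 for all t ∈ K). Then for each player i in union P_a, the coalitional Tijs value equals 𝒯_a(N,c,P)·c^s(i)/Σ_{j∈P_a} c^s(j), where 𝒯_a(N,c,P) = τ_a(M,c_P) is the Tijs value of union a in the quotient game and c^s(i) = Σ_{t∈T(i)} C(t). -/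
open Finset

/-- If every section of a generalized highway problem with a
priori unions is shared (`|N_t| > 1` for all `t`), then the coalitional Tijs
value of player `i ∈ P_a` equals `τ_a(M,c_P)·c^s(i)/Σ_{j∈P_a} c^s(j)`,
where here `c^s(i) = Σ_{t∈T(i)} C(t)`. -/
theorem coalitional_tijs_all_shared
    {N K M : Type*} [Fintype N] [DecidableEq N] [Fintype K] [DecidableEq K]
    [Fintype M] [DecidableEq M]
    (C : K → ℝ) (hC : ∀ t, 0 ≤ C t)
    (T : N → Finset K) (hT : ∀ i, (T i).Nonempty)
    (hK : ∀ t : K, ∃ i, t ∈ T i)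
    (c : Finset N → ℝ) (hc : ∀ S : Finset N, c S = ∑ t ∈ S.biUnion T, C t)
    (Pp : M → Finset N)
    (hdis : ∀ a b : M, a ≠ b → Disjoint (Pp a) (Pp b))
    (hne : ∀ a : M, (Pp a).Nonempty)
    (part : N → M) (hpart : ∀ i : N, i ∈ Pp (part i))
    -- the quotient game and its Tijs value
    (cP : Finset M → ℝ) (hcP : ∀ H : Finset M, cP H = c (H.biUnion Pp))
    (MU : M → ℝ) (hMU : ∀ b, MU b = cP Finset.univ - cP (Finset.univ.erase b))
    (mU : M → ℝ)
    (hmU : ∀ b, IsLeast {x : ℝ | ∃ H : Finset M, b ∈ H ∧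
        x = cP H - ∑ b' ∈ H.erase b, MU b'} (mU b))
    (β : ℝ) (hβ0 : 0 ≤ β) (hβ1 : β ≤ 1)
    (τU : M → ℝ) (hτU : ∀ b, τU b = mU b + β * (MU b - mU b))
    (heffU : ∑ b : M, τU b = cP Finset.univ)
    -- player-level utopia and lower payoffs (minimum over coalitions in `P(a)`)
    (Mv : N → ℝ) (hMv : ∀ i, Mv i = c Finset.univ - c (Finset.univ.erase i))
    (m : N → ℝ)
    (hm : ∀ i, IsLeast {x : ℝ | ∃ (L : Finset M) (T' : Finset N),
        part i ∉ L ∧ T' ⊆ Pp (part i) ∧ i ∈ T' ∧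
        x = c (L.biUnion Pp ∪ T') - ∑ j ∈ (L.biUnion Pp ∪ T').erase i, Mv j} (m i))
    -- within-union normalizing constants
    (α : M → ℝ) (hα0 : ∀ a, 0 ≤ α a) (hα1 : ∀ a, α a ≤ 1)
    (hnorm : ∀ a : M, ∑ i ∈ Pp a, (m i + α a * (Mv i - m i)) = τU a)
    -- hypotheses: every section is shared, and denominators are positive
    (hshared : ∀ t : K, 1 < ((Finset.univ : Finset N).filter (fun j => t ∈ T j)).card)
    (hden : ∀ a : M, 0 < ∑ j ∈ Pp a, ∑ t ∈ T j, C t) :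
    ∀ i : N, m i + α (part i) * (Mv i - m i)
      = τU (part i) * (∑ t ∈ T i, C t) / ∑ j ∈ Pp (part i), ∑ t ∈ T j, C t := by

  -- Mv i = 0 for all i
  have hMv0 : ∀ i : N, Mv i = 0 := by
    intro i
    have hbi : (Finset.univ.erase i).biUnion T = (Finset.univ : Finset N).biUnion T := by
      apply Finset.Subset.antisymm
      · exact Finset.biUnion_subset_biUnion_of_subset_left T (Finset.erase_subset _ _)
      · intro t ht
        have := hshared t
        have hex : ∃ j, j ≠ i ∧ t ∈ T j := by
          by_contra hcon
          push_neg at hcon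
          have hsub : (Finset.univ : Finset N).filter (fun j => t ∈ T j) ⊆ {i} := by
            intro j hj
            simp only [Finset.mem_filter] at hj
            by_contra hji
            exact absurd hj.2 ((fun h => h) (by
              have := hcon j (by simpa using hji)
              exact this))
          have := Finset.card_le_card hsub
          simp at this
          omega
        obtain ⟨j, hji, htj⟩ := hex
        exact Finset.mem_biUnion.mpr ⟨j, Finset.mem_erase.mpr ⟨hji, Finset.mem_univ j⟩, htj⟩
    rw [hMv i, hc, hc, hbi]
    ring
  -- m i = ∑ t ∈ T i, C t
  have hcs : ∀ i : N, m i = ∑ t ∈ T i, C t := by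
    intro i
    obtain ⟨hmem, hlb⟩ := hm i
    apply le_antisymm
    · have : (∑ t ∈ T i, C t) ∈ {x : ℝ | ∃ (L : Finset M) (T' : Finset N),
          part i ∉ L ∧ T' ⊆ Pp (part i) ∧ i ∈ T' ∧
          x = c (L.biUnion Pp ∪ T') - ∑ j ∈ (L.biUnion Pp ∪ T').erase i, Mv j} := by
        refine ⟨∅, {i}, by simp, by simp [hpart i], by simp, ?_⟩
        simp [hc, Finset.singleton_biUnion]
      exact hlb this
    · obtain ⟨L, T', _, _, hiT', hx⟩ := hmem
      have hsum0 : ∑ j ∈ (L.biUnion Pp ∪ T').erase i, Mv j = 0 :=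
        Finset.sum_eq_zero fun j _ => hMv0 j
      rw [hx, hsum0, sub_zero, hc]
      apply Finset.sum_le_sum_of_subset_of_nonneg
      · intro t ht
        exact Finset.mem_biUnion.mpr ⟨i, Finset.mem_union_right _ hiT', ht⟩
      · intro t _ _; exact hC t
  intro i
  set a := part i with ha
  set D := ∑ j ∈ Pp a, ∑ t ∈ T j, C t with hD
  have hDpos : 0 < D := hden a
  have hτ : τU a = (1 - α a) * D := by
    rw [← hnorm a, hD, Finset.mul_sum]
    apply Finset.sum_congr rfl
    intro j _
    rw [hcs j, hMv0 j]
    ring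
  rw [hcs i, hMv0 i, hτ]
  field_simp
  ring
end

section
/- Let (N,K,C,T,P) be a generalized highway problem with a priori unions and let a* be the alliance obtained by merging unions 1,…,a (2 ≤ a ≤ A). Suppose no section that was shared between unions in the original quotient game becomes exclusive to the alliance in the modified quotient game (K_{P*}^{se} = ∅). Then the coalitional-Tijs total assigned to the alliance satisfies 𝒯_{a*}(N,c,P*) ≤ Σ_{α=1}^{a} 𝒯_α(N,c,P), with strict inequality if and only if the alliance shares the use of some section with a union outside it and some section is used by at least two unions of the alliance. -/
open Finset

lemma sum_sum_filter_aux {K B' : Type*} [Fintype K] [DecidableEq K]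
    (Bs : Finset B') (U : B' → Finset K) (C : K → ℝ) (P : K → Prop) [DecidablePred P] :
    ∑ b ∈ Bs, ∑ t ∈ (U b).filter P, C t
      = ∑ t ∈ Finset.univ.filter P, ((Bs.filter (fun b => t ∈ U b)).card : ℝ) * C t := by
  have h1 : ∀ b, ∑ t ∈ (U b).filter P, C t
      = ∑ t : K, if t ∈ U b ∧ P t then C t else 0 := by
    intro b
    rw [← Finset.sum_filter]
    congr 1
    ext t
    simp [Finset.mem_filter]
  simp only [h1]
  rw [Finset.sum_comm]
  rw [Finset.sum_filter]
  refine Finset.sum_congr rfl fun t _ => ?_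
  by_cases hP : P t
  · simp only [hP, and_true, if_true]
    rw [← Finset.sum_filter, Finset.sum_const, nsmul_eq_mul]
  · simp [hP]

lemma frac_key_aux (M x X Y : ℝ) (hM : 0 < M) (hx : 0 ≤ x) (hY : 0 < Y) (hxX : x ≤ X) :
    M * x / (x + Y) ≤ M * X / (X + Y) ∧ (M * x / (x + Y) < M * X / (X + Y) ↔ x < X) := by
  have hD : 0 < x + Y := by linarith
  have hD' : 0 < X + Y := by linarith
  constructor
  · rw [div_le_div_iff₀ hD hD']
    nlinarith [mul_nonneg (mul_nonneg hM.le hY.le) (sub_nonneg.mpr hxX)]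
  · rw [div_lt_div_iff₀ hD hD']
    constructor
    · intro h
      by_contra hc
      push_neg at hc
      have hxe : x = X := le_antisymm hxX hc
      rw [hxe] at h
      exact absurd h (lt_irrefl _)
    · intro h
      nlinarith [mul_pos (mul_pos hM hY) (sub_pos.mpr h)]

/-- Under the coalitional Tijs value (closed-form union totals),
if no section that was shared between unions becomes exclusive to the alliance
after merging unions `1,…,a` (`K_{P*}^{se} = ∅`), then the alliance's total is
at most the sum of the pre-merge totals, with strict inequality iff the
alliance shares some section with an outside union and some section is used by
at least two unions of the alliance. -/
theorem coalitional_tijs_alliance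
    {N K : Type*} [Fintype N] [DecidableEq N] [Fintype K] [DecidableEq K]
    (C : K → ℝ) (hC : ∀ t, 0 < C t)
    (T : N → Finset K) (hT : ∀ i, (T i).Nonempty)
    (hK : ∀ t : K, ∃ i, t ∈ T i)
    (A a : ℕ) (ha2 : 2 ≤ a) (haA : a ≤ A)
    (Pp : Fin A → Finset N)
    (hdis : ∀ b b' : Fin A, b ≠ b' → Disjoint (Pp b) (Pp b'))
    (hcov : ∀ i : N, ∃ b : Fin A, i ∈ Pp b)
    (hne : ∀ b : Fin A, (Pp b).Nonempty) :
    -- sections used by each union, and union-level usage counts (original game)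
    let U : Fin A → Finset K := fun b => (Pp b).biUnion T
    let At : K → ℕ := fun t => ((Finset.univ : Finset (Fin A)).filter (fun b => t ∈ U b)).card
    let cPe : Fin A → ℝ := fun b => ∑ t ∈ (U b).filter (fun t => At t = 1), C t
    let cPs : Fin A → ℝ := fun b => ∑ t ∈ (U b).filter (fun t => 1 < At t), C t
    let cPsM : ℝ := ∑ t ∈ Finset.univ.filter (fun t : K => 1 < At t), C t
    -- coalitional-Tijs total of union `b` in the original game
    let TT : Fin A → ℝ := fun b =>
      if Finset.univ.filter (fun t : K => 1 < At t) = ∅ then cPe b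
      else cPe b + cPsM * cPs b / ∑ b' : Fin A, cPs b'
    -- the alliance of unions `1,…,a` and the modified game
    let B : Finset (Fin A) := Finset.univ.filter (fun b => (b : ℕ) < a)
    let UA : Finset K := B.biUnion U
    let Outs : K → Finset (Fin A) := fun t =>
      Finset.univ.filter (fun b : Fin A => a ≤ (b : ℕ) ∧ t ∈ U b)
    let Ats : K → ℕ := fun t => (Outs t).card + (if t ∈ UA then 1 else 0)
    let cPeA : ℝ := ∑ t ∈ UA.filter (fun t => Ats t = 1), C t
    let cPsA : ℝ := ∑ t ∈ UA.filter (fun t => 1 < Ats t), C t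
    let cPsO : Fin A → ℝ := fun b => ∑ t ∈ (U b).filter (fun t => 1 < Ats t), C t
    let cPsMs : ℝ := ∑ t ∈ Finset.univ.filter (fun t : K => 1 < Ats t), C t
    -- coalitional-Tijs total of the alliance in the modified game
    let TTA : ℝ :=
      if Finset.univ.filter (fun t : K => 1 < Ats t) = ∅ then cPeA
      else cPeA + cPsMs * cPsA /
        (cPsA + ∑ b ∈ Finset.univ.filter (fun b : Fin A => a ≤ (b : ℕ)), cPsO b)
    -- hypothesis `K_{P*}^{se} = ∅`: no union-shared section becomes exclusive
    ∀ _hse : (∀ t : K, 1 < At t → 1 < Ats t),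
    TTA ≤ (∑ b ∈ B, TT b) ∧
      (TTA < (∑ b ∈ B, TT b) ↔
        (∃ t ∈ UA, (Outs t).Nonempty) ∧
          ∃ t : K, 1 < (B.filter (fun b => t ∈ U b)).card) := by
  intro U At cPe cPs cPsM TT B UA Outs Ats cPeA cPsA cPsO cPsMs TTA hse
  classical
  set nB : K → ℕ := fun t => (B.filter (fun b => t ∈ U b)).card with hnB
  have hnBt : ∀ t : K, (B.filter (fun b => t ∈ U b)).card = nB t := fun t => rfl
  -- membership in UA vs nB
  have hUAmem : ∀ t : K, t ∈ UA ↔ 0 < nB t := by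
    intro t
    constructor
    · intro h
      rw [← hnBt, Finset.card_pos]
      obtain ⟨b, hb, htb⟩ := Finset.mem_biUnion.mp h
      exact ⟨b, Finset.mem_filter.mpr ⟨hb, htb⟩⟩
    · intro h
      rw [← hnBt, Finset.card_pos] at h
      obtain ⟨b, hb⟩ := h
      rw [Finset.mem_filter] at hb
      exact Finset.mem_biUnion.mpr ⟨b, hb.1, hb.2⟩
  -- At = nB + |Outs|
  have hAt_eq : ∀ t : K, At t = nB t + (Outs t).card := by
    intro t
    have hsplit : (Finset.univ.filter (fun b : Fin A => t ∈ U b))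
        = (Finset.univ.filter (fun b : Fin A => (b : ℕ) < a ∧ t ∈ U b))
          ∪ (Finset.univ.filter (fun b : Fin A => a ≤ (b : ℕ) ∧ t ∈ U b)) := by
      ext b
      simp only [Finset.mem_filter, Finset.mem_union, Finset.mem_univ, true_and]
      rcases lt_or_ge (b : ℕ) a with h | h
      · have h' : ¬ a ≤ (b : ℕ) := not_le.mpr h
        tauto
      · have h' : ¬ (b : ℕ) < a := not_lt.mpr h
        tauto
    have hdisj : Disjoint (Finset.univ.filter (fun b : Fin A => (b : ℕ) < a ∧ t ∈ U b))
        (Finset.univ.filter (fun b : Fin A => a ≤ (b : ℕ) ∧ t ∈ U b)) := by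
      rw [Finset.disjoint_left]
      intro b hb1 hb2
      rw [Finset.mem_filter] at hb1 hb2
      omega
    have hBf : B.filter (fun b => t ∈ U b)
        = Finset.univ.filter (fun b : Fin A => (b : ℕ) < a ∧ t ∈ U b) := by
      show (Finset.univ.filter (fun b : Fin A => (b : ℕ) < a)).filter (fun b => t ∈ U b) = _
      rw [Finset.filter_filter]
    show (Finset.univ.filter (fun b : Fin A => t ∈ U b)).card = _
    rw [hsplit, Finset.card_union_of_disjoint hdisj, ← hnBt t, hBf]
  have hAts_eq : ∀ t : K, Ats t = (Outs t).card + (if 0 < nB t then 1 else 0) := by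
    intro t
    by_cases hu : t ∈ UA
    · have h1 : 0 < nB t := (hUAmem t).mp hu
      show (Outs t).card + (if t ∈ UA then 1 else 0) = _
      rw [if_pos hu, if_pos h1]
    · have h1 : ¬ 0 < nB t := fun h => hu ((hUAmem t).mpr h)
      show (Outs t).card + (if t ∈ UA then 1 else 0) = _
      rw [if_neg hu, if_neg h1]
  have hAts_le : ∀ t : K, Ats t ≤ At t := by
    intro t
    rw [hAts_eq, hAt_eq]
    split_ifs with h <;> omega
  have hSiff : ∀ t : K, 1 < At t ↔ 1 < Ats t :=
    fun t => ⟨hse t, fun h => lt_of_lt_of_le h (hAts_le t)⟩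
  have hSeq : Finset.univ.filter (fun t : K => 1 < Ats t)
      = Finset.univ.filter (fun t : K => 1 < At t) := by
    ext t
    simp only [Finset.mem_filter, Finset.mem_univ, true_and]
    exact (hSiff t).symm
  have hcPsO : ∀ b : Fin A, cPsO b = cPs b := by
    intro b
    show ∑ t ∈ (U b).filter (fun t => 1 < Ats t), C t
        = ∑ t ∈ (U b).filter (fun t => 1 < At t), C t
    congr 1
    ext t
    simp only [Finset.mem_filter]
    exact and_congr_right fun _ => (hSiff t).symm
  have hcPsMs : cPsMs = cPsM := by
    show ∑ t ∈ Finset.univ.filter (fun t : K => 1 < Ats t), C t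
        = ∑ t ∈ Finset.univ.filter (fun t : K => 1 < At t), C t
    rw [hSeq]
  -- exclusive parts agree
  have hExcl : ∑ b ∈ B, cPe b = cPeA := by
    show ∑ b ∈ B, ∑ t ∈ (U b).filter (fun t => At t = 1), C t
        = ∑ t ∈ UA.filter (fun t => Ats t = 1), C t
    rw [sum_sum_filter_aux B U C (fun t => At t = 1)]
    have h1 : UA.filter (fun t => Ats t = 1)
        = (Finset.univ.filter (fun t : K => At t = 1)).filter (fun t => 0 < nB t) := by
      ext t
      simp only [Finset.mem_filter, Finset.mem_univ, true_and]
      constructor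
      · rintro ⟨hu, h1⟩
        have hb : 0 < nB t := (hUAmem t).mp hu
        have h2 : ¬ 1 < At t := by
          intro hlt
          have := hse t hlt
          omega
        have h3 := hAt_eq t
        exact ⟨by omega, hb⟩
      · rintro ⟨h1, hb⟩
        refine ⟨(hUAmem t).mpr hb, ?_⟩
        have h3 := hAt_eq t
        rw [hAts_eq t, if_pos hb]
        omega
    rw [h1]
    refine Eq.trans (Finset.sum_congr rfl fun t ht => ?_) (Finset.sum_filter _ _).symm
    simp only [Finset.mem_filter, Finset.mem_univ, true_and] at ht
    have h3 := hAt_eq t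
    rw [hnBt]
    by_cases hb : 0 < nB t
    · have h4 : nB t = 1 := by omega
      rw [if_pos hb, h4]
      norm_num
    · have h4 : nB t = 0 := by omega
      rw [if_neg hb, h4]
      norm_num
  -- shared parts
  set S : Finset K := Finset.univ.filter (fun t : K => 1 < At t) with hS
  have hcPsA : cPsA = ∑ t ∈ S.filter (fun t => 0 < nB t), C t := by
    show ∑ t ∈ UA.filter (fun t => 1 < Ats t), C t = _
    congr 1
    ext t
    simp only [hS, Finset.mem_filter, Finset.mem_univ, true_and]
    constructor
    · rintro ⟨hu, h1⟩
      exact ⟨(hSiff t).mpr h1, (hUAmem t).mp hu⟩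
    · rintro ⟨h1, hb⟩
      exact ⟨(hUAmem t).mpr hb, (hSiff t).mp h1⟩
  have hXsum : ∑ b ∈ B, cPs b = ∑ t ∈ S, (nB t : ℝ) * C t := by
    show ∑ b ∈ B, ∑ t ∈ (U b).filter (fun t => 1 < At t), C t = _
    rw [sum_sum_filter_aux B U C (fun t => 1 < At t), hS]
  have hle_pt : ∀ t ∈ S, (if 0 < nB t then C t else 0) ≤ (nB t : ℝ) * C t := by
    intro t _
    by_cases hb : 0 < nB t
    · rw [if_pos hb]
      have h1 : (1 : ℝ) ≤ (nB t : ℝ) := by exact_mod_cast hb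
      nlinarith [(hC t).le]
    · rw [if_neg hb]
      exact mul_nonneg (Nat.cast_nonneg _) (hC t).le
  have hcPsA' : cPsA = ∑ t ∈ S, (if 0 < nB t then C t else 0) := by
    rw [hcPsA, Finset.sum_filter]
  have hcPsA_le_X : cPsA ≤ ∑ t ∈ S, (nB t : ℝ) * C t := by
    rw [hcPsA']
    exact Finset.sum_le_sum hle_pt
  have hstrict_iff : cPsA < ∑ t ∈ S, (nB t : ℝ) * C t ↔ ∃ t : K, 1 < nB t := by
    rw [hcPsA']
    constructor
    · intro h
      by_contra hno
      push_neg at hno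
      have heq : ∀ t ∈ S, (if 0 < nB t then C t else 0) = (nB t : ℝ) * C t := by
        intro t _
        rcases Nat.lt_or_ge 0 (nB t) with hb | hb
        · have h1 : nB t = 1 := le_antisymm (hno t) hb
          rw [if_pos hb, h1]
          norm_num
        · have h0 : nB t = 0 := Nat.le_zero.mp hb
          rw [if_neg (by omega), h0]
          norm_num
      rw [Finset.sum_congr rfl heq] at h
      exact lt_irrefl _ h
    · rintro ⟨t0, ht0⟩
      have ht0S : t0 ∈ S := by
        simp only [hS, Finset.mem_filter, Finset.mem_univ, true_and]
        have := hAt_eq t0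
        omega
      refine Finset.sum_lt_sum hle_pt ⟨t0, ht0S, ?_⟩
      rw [if_pos (by omega : 0 < nB t0)]
      have h1 : (1 : ℝ) < (nB t0 : ℝ) := by exact_mod_cast ht0
      nlinarith [hC t0]
  have hcPsA_nonneg : 0 ≤ cPsA := by
    rw [hcPsA]
    exact Finset.sum_nonneg fun t _ => (hC t).le
  -- case split on S
  by_cases hSvoid : S = ∅
  · -- no shared sections at all
    have hAtv : Finset.univ.filter (fun t : K => 1 < At t) = ∅ := by rw [← hS]; exact hSvoid
    have hAtsVoid : Finset.univ.filter (fun t : K => 1 < Ats t) = ∅ := by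
      rw [hSeq]; exact hAtv
    have hTTA : TTA = cPeA := by
      show (if Finset.univ.filter (fun t : K => 1 < Ats t) = ∅ then cPeA
        else cPeA + cPsMs * cPsA /
          (cPsA + ∑ b ∈ Finset.univ.filter (fun b : Fin A => a ≤ (b : ℕ)), cPsO b)) = cPeA
      rw [if_pos hAtsVoid]
    have hTT : ∀ b, TT b = cPe b := by
      intro b
      show (if Finset.univ.filter (fun t : K => 1 < At t) = ∅ then cPe b
        else cPe b + cPsM * cPs b / ∑ b' : Fin A, cPs b') = cPe b
      rw [if_pos hAtv]
    have heq : TTA = ∑ b ∈ B, TT b := by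
      rw [hTTA, ← hExcl]
      exact (Finset.sum_congr rfl fun b _ => (hTT b)).symm
    refine ⟨le_of_eq heq, ?_, ?_⟩
    · intro h
      rw [heq] at h
      exact absurd h (lt_irrefl _)
    · rintro ⟨⟨t, htUA, b0, hb0⟩, -⟩
      exfalso
      have h2 : 1 < Ats t := by
        rw [hAts_eq, if_pos ((hUAmem t).mp htUA)]
        have h3 : 0 < (Outs t).card := Finset.card_pos.mpr ⟨b0, hb0⟩
        omega
      have h4 : t ∈ Finset.univ.filter (fun t : K => 1 < Ats t) :=
        Finset.mem_filter.mpr ⟨Finset.mem_univ t, h2⟩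
      rw [hAtsVoid] at h4
      exact Finset.notMem_empty t h4
  · -- shared sections exist
    have hSne : S.Nonempty := Finset.nonempty_iff_ne_empty.mpr hSvoid
    have hcPsM_pos : 0 < cPsM := by
      show 0 < ∑ t ∈ Finset.univ.filter (fun t : K => 1 < At t), C t
      rw [← hS]
      exact Finset.sum_pos (fun t _ => hC t) hSne
    set Y : ℝ := ∑ b ∈ Finset.univ.filter (fun b : Fin A => a ≤ (b : ℕ)), cPs b with hY
    have hcPs_nonneg : ∀ b : Fin A, 0 ≤ cPs b := by
      intro b
      show 0 ≤ ∑ t ∈ (U b).filter (fun t => 1 < At t), C t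
      exact Finset.sum_nonneg fun t _ => (hC t).le
    have hYpos : 0 < Y := by
      obtain ⟨t0, ht0⟩ := hSne
      have hAt0 : 1 < At t0 := by
        rw [hS] at ht0
        exact (Finset.mem_filter.mp ht0).2
      have hAts0 : 1 < Ats t0 := hse t0 hAt0
      have hO : 0 < (Outs t0).card := by
        rw [hAts_eq] at hAts0
        split_ifs at hAts0 <;> omega
      obtain ⟨b0, hb0⟩ := Finset.card_pos.mp hO
      have hb0' : a ≤ (b0 : ℕ) ∧ t0 ∈ U b0 := by
        have := Finset.mem_filter.mp hb0
        exact this.2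
      have hb0mem : b0 ∈ Finset.univ.filter (fun b : Fin A => a ≤ (b : ℕ)) :=
        Finset.mem_filter.mpr ⟨Finset.mem_univ b0, hb0'.1⟩
      have hcPsb0 : 0 < cPs b0 := by
        have hmem : t0 ∈ (U b0).filter (fun t => 1 < At t) :=
          Finset.mem_filter.mpr ⟨hb0'.2, hAt0⟩
        show 0 < ∑ t ∈ (U b0).filter (fun t => 1 < At t), C t
        calc (0 : ℝ) < C t0 := hC t0
          _ ≤ _ := Finset.single_le_sum (fun t _ => (hC t).le) hmem
      calc (0 : ℝ) < cPs b0 := hcPsb0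
        _ ≤ Y := Finset.single_le_sum (fun b _ => hcPs_nonneg b) hb0mem
    set Xr : ℝ := ∑ t ∈ S, (nB t : ℝ) * C t with hXr
    have hfilterAts : ¬ Finset.univ.filter (fun t : K => 1 < Ats t) = ∅ := by
      rw [hSeq]
      exact hSvoid
    have hfilterAt : ¬ Finset.univ.filter (fun t : K => 1 < At t) = ∅ := by
      rw [← hS]
      exact hSvoid
    have hOsum : ∑ b ∈ Finset.univ.filter (fun b : Fin A => a ≤ (b : ℕ)), cPsO b = Y := by
      rw [hY]
      exact Finset.sum_congr rfl fun b _ => hcPsO b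
    have hTTA : TTA = cPeA + cPsM * cPsA / (cPsA + Y) := by
      show (if Finset.univ.filter (fun t : K => 1 < Ats t) = ∅ then cPeA
        else cPeA + cPsMs * cPsA /
          (cPsA + ∑ b ∈ Finset.univ.filter (fun b : Fin A => a ≤ (b : ℕ)), cPsO b)) = _
      rw [if_neg hfilterAts, hcPsMs, hOsum]
    have hDenom : ∑ b' : Fin A, cPs b' = Xr + Y := by
      have hsplit : ∑ b ∈ B, cPs b
            + ∑ b ∈ Finset.univ.filter (fun b : Fin A => ¬ (b : ℕ) < a), cPs b
          = ∑ b' : Fin A, cPs b' :=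
        Finset.sum_filter_add_sum_filter_not Finset.univ (fun b : Fin A => (b : ℕ) < a) cPs
      have hnotf : Finset.univ.filter (fun b : Fin A => ¬ (b : ℕ) < a)
          = Finset.univ.filter (fun b : Fin A => a ≤ (b : ℕ)) := by
        ext b
        simp only [Finset.mem_filter, Finset.mem_univ, true_and, not_lt]
      rw [← hsplit, hXsum, hnotf, ← hY]
    have hTTsum : ∑ b ∈ B, TT b = cPeA + cPsM * Xr / (Xr + Y) := by
      have h1 : ∀ b, TT b = cPe b + cPsM * cPs b / ∑ b' : Fin A, cPs b' := by
        intro b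
        show (if Finset.univ.filter (fun t : K => 1 < At t) = ∅ then cPe b
          else cPe b + cPsM * cPs b / ∑ b' : Fin A, cPs b') = _
        rw [if_neg hfilterAt]
      have h2 : ∑ b ∈ B, TT b
          = ∑ b ∈ B, (cPe b + cPsM * cPs b / ∑ b' : Fin A, cPs b') :=
        Finset.sum_congr rfl fun b _ => h1 b
      rw [h2, Finset.sum_add_distrib, hExcl, hDenom, ← Finset.sum_div, ← Finset.mul_sum,
        hXsum]
    have hXr_ge : cPsA ≤ Xr := hcPsA_le_X
    obtain ⟨hfrac_le, hfrac_lt_iff⟩ :=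
      frac_key_aux cPsM cPsA Xr Y hcPsM_pos hcPsA_nonneg hYpos hXr_ge
    rw [hTTA, hTTsum]
    refine ⟨add_le_add_right hfrac_le cPeA, ?_, ?_⟩
    · intro hlt
      have h2 : cPsA < Xr := hfrac_lt_iff.mp (lt_of_add_lt_add_left hlt)
      obtain ⟨t0, ht0⟩ := hstrict_iff.mp h2
      have hAt0 : 1 < At t0 := by
        rw [hAt_eq]
        omega
      have hAts0 : 1 < Ats t0 := hse t0 hAt0
      have hUAt0 : t0 ∈ UA := (hUAmem t0).mpr (by omega)
      have hOuts : (Outs t0).Nonempty := by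
        rw [hAts_eq, if_pos (by omega : 0 < nB t0)] at hAts0
        exact Finset.card_pos.mp (by omega)
      exact ⟨⟨t0, hUAt0, hOuts⟩, ⟨t0, ht0⟩⟩
    · rintro ⟨-, t0, ht0⟩
      have h2 : cPsA < Xr := hstrict_iff.mpr ⟨t0, ht0⟩
      exact add_lt_add_right (hfrac_lt_iff.mpr h2) cPeA
end

section
/- The Owen value on generalized highway problems with a coalitional structure satisfies: (PO) the payments sum to the total cost C(K); (ETPA) two players in the same union using exactly the same sections pay the same; (ETPU) two unions using the same set of sections pay the same total; and (IIOC) a player's payment depends only on the restriction of the problem and partition to the sections that player uses. -/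
open Finset

/-- A generalized highway problem with a coalitional structure: agents drawn
from `𝒩`, sections from `𝒦`, union labels from `ℳ`.  `N` is the (finite) agent
set, `K` the section set, `C` the section costs, `T i` the sections used by
agent `i`, `M` the set of (nonempty) a priori unions and `u i` the union label
of agent `i`. -/
structure GHP (𝒩 𝒦 ℳ : Type*) where
  N : Finset 𝒩
  K : Finset 𝒦
  C : 𝒦 → ℝ
  T : 𝒩 → Finset 𝒦
  M : Finset ℳ
  u : 𝒩 → Option ℳ

namespace GHP

variable {𝒩 𝒦 ℳ : Type*} [DecidableEq 𝒩] [DecidableEq 𝒦] [DecidableEq ℳ]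

/-- The members of the a priori union labelled `a`. -/
def part (Γ : GHP 𝒩 𝒦 ℳ) (a : ℳ) : Finset 𝒩 :=
  Γ.N.filter (fun i => Γ.u i = some a)

/-- Validity of a generalized highway problem with a coalitional structure. -/
def Valid (Γ : GHP 𝒩 𝒦 ℳ) : Prop :=
  (∀ i ∈ Γ.N, (Γ.T i).Nonempty ∧ Γ.T i ⊆ Γ.K) ∧
  (∀ i, i ∉ Γ.N → Γ.T i = ∅) ∧
  (∀ t ∈ Γ.K, ∃ i ∈ Γ.N, t ∈ Γ.T i) ∧
  (∀ t, 0 ≤ Γ.C t) ∧ (∀ t, t ∉ Γ.K → Γ.C t = 0) ∧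
  (∀ i ∈ Γ.N, ∃ a ∈ Γ.M, Γ.u i = some a) ∧
  (∀ i, i ∉ Γ.N → Γ.u i = none) ∧
  (∀ a ∈ Γ.M, (Γ.part a).Nonempty)

/-- Restriction of a problem (and its partition) to a set of sections `K'`. -/
def restrict (Γ : GHP 𝒩 𝒦 ℳ) (K' : Finset 𝒦) : GHP 𝒩 𝒦 ℳ where
  N := Γ.N.filter (fun i => (Γ.T i ∩ K').Nonempty)
  K := K'
  C := fun t => if t ∈ K' then Γ.C t else 0
  T := fun i => if (Γ.T i ∩ K').Nonempty then Γ.T i ∩ K' else ∅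
  M := Γ.M.filter (fun a =>
    ((Γ.N.filter (fun i => (Γ.T i ∩ K').Nonempty)).filter
      (fun i => Γ.u i = some a)).Nonempty)
  u := fun i => if i ∈ Γ.N.filter (fun i => (Γ.T i ∩ K').Nonempty) then Γ.u i else none

/-- The sections used by union `a`. -/
def unionSections (Γ : GHP 𝒩 𝒦 ℳ) (a : ℳ) : Finset 𝒦 := (Γ.part a).biUnion Γ.T

/-- The set of unions using section `t`. -/
def usingUnions (Γ : GHP 𝒩 𝒦 ℳ) (t : 𝒦) : Finset ℳ :=
  Γ.M.filter (fun a => t ∈ Γ.unionSections a)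

/-- The set of agents using section `t`. -/
def usingAgents (Γ : GHP 𝒩 𝒦 ℳ) (t : 𝒦) : Finset 𝒩 :=
  Γ.N.filter (fun i => t ∈ Γ.T i)

/-- The members of `i`'s own union that use section `t`. -/
def usingMates (Γ : GHP 𝒩 𝒦 ℳ) (i : 𝒩) (t : 𝒦) : Finset 𝒩 :=
  (Γ.N.filter (fun j => Γ.u j = Γ.u i)).filter (fun j => t ∈ Γ.T j)

/-- The Owen value of a generalized highway problem with a coalitional
structure, in its explicit form `Ψ_i = Σ_{t∈T(i)} C(t)/(|𝒜_t|·|N_t^a|)`. -/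
noncomputable def owen (Γ : GHP 𝒩 𝒦 ℳ) (i : 𝒩) : ℝ :=
  ∑ t ∈ Γ.T i, Γ.C t / (((Γ.usingUnions t).card : ℝ) * ((Γ.usingMates i t).card : ℝ))

end GHP

open GHP

namespace GHP

variable {𝒩 𝒦 ℳ : Type*} [DecidableEq 𝒩] [DecidableEq 𝒦] [DecidableEq ℳ]

lemma aux_sum_swap {α β : Type*} [DecidableEq α] [DecidableEq β]
    (N : Finset α) (K : Finset β) (T : α → Finset β)
    (h : ∀ i ∈ N, T i ⊆ K) (f : α → β → ℝ) :
    ∑ i ∈ N, ∑ t ∈ T i, f i t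
      = ∑ t ∈ K, ∑ i ∈ N.filter (fun i => t ∈ T i), f i t := by
  have h1 : ∀ i ∈ N, ∑ t ∈ T i, f i t = ∑ t ∈ K, if t ∈ T i then f i t else 0 := by
    intro i hi
    rw [Finset.sum_ite_mem, Finset.inter_eq_right.mpr (h i hi)]
  rw [Finset.sum_congr rfl h1, Finset.sum_comm]
  exact Finset.sum_congr rfl fun t _ => (Finset.sum_filter _ _).symm

set_option linter.unusedSectionVars false in
lemma usingMates_eq (Γ : GHP 𝒩 𝒦 ℳ) {i : 𝒩} {a : ℳ} (h : Γ.u i = some a) (t : 𝒦) :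
    Γ.usingMates i t = (Γ.part a).filter (fun j => t ∈ Γ.T j) := by
  simp only [usingMates, part, h]

lemma inner_const_sum (Γ : GHP 𝒩 𝒦 ℳ) {a : ℳ} {t : 𝒦}
    (hne : ((Γ.part a).filter (fun j => t ∈ Γ.T j)).Nonempty) :
    ∑ i ∈ (Γ.part a).filter (fun j => t ∈ Γ.T j),
      Γ.C t / (((Γ.usingUnions t).card : ℝ) * ((Γ.usingMates i t).card : ℝ))
      = Γ.C t / ((Γ.usingUnions t).card : ℝ) := by
  set S := (Γ.part a).filter (fun j => t ∈ Γ.T j) with hS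
  have hmates : ∀ i ∈ S, Γ.usingMates i t = S := by
    intro i hi
    have hia : Γ.u i = some a := (Finset.mem_filter.mp (Finset.mem_filter.mp hi).1).2
    rw [usingMates_eq Γ hia t]
  rw [Finset.sum_congr rfl (fun i hi => by rw [hmates i hi])]
  rw [Finset.sum_const, nsmul_eq_mul]
  have hm : (0 : ℝ) < (S.card : ℝ) := by
    exact_mod_cast Finset.card_pos.mpr hne
  rw [mul_comm, div_mul_eq_mul_div, mul_div_mul_right _ _ hm.ne']

lemma sum_usingAgents (Γ : GHP 𝒩 𝒦 ℳ) (hv : Γ.Valid) {t : 𝒦} (ht : t ∈ Γ.K) :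
    ∑ i ∈ Γ.usingAgents t,
      Γ.C t / (((Γ.usingUnions t).card : ℝ) * ((Γ.usingMates i t).card : ℝ))
      = Γ.C t := by
  obtain ⟨hT, hT2, hcov, hC0, hC1, hu, hu2, hM⟩ := hv
  have hbU : Γ.usingAgents t = (Γ.usingUnions t).biUnion
      (fun a => (Γ.part a).filter (fun j => t ∈ Γ.T j)) := by
    ext j
    simp only [usingAgents, usingUnions, unionSections, Finset.mem_biUnion,
      Finset.mem_filter]
    constructor
    · rintro ⟨hjN, hjt⟩
      obtain ⟨a, haM, hja⟩ := hu j hjN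
      have hjp : j ∈ Γ.part a := Finset.mem_filter.mpr ⟨hjN, hja⟩
      exact ⟨a, ⟨haM, ⟨j, hjp, hjt⟩⟩, ⟨Finset.mem_filter.mpr ⟨hjN, hja⟩, hjt⟩⟩
    · rintro ⟨a, _, hjp, hjt⟩
      exact ⟨(Finset.mem_filter.mp hjp).1, hjt⟩
  have hdisj : (↑(Γ.usingUnions t) : Set ℳ).PairwiseDisjoint
      (fun a => (Γ.part a).filter (fun j => t ∈ Γ.T j)) := by
    intro a _ b _ hab
    refine Finset.disjoint_left.mpr ?_
    intro j hja hjb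
    have h1 : Γ.u j = some a := (Finset.mem_filter.mp (Finset.mem_filter.mp hja).1).2
    have h2 : Γ.u j = some b := (Finset.mem_filter.mp (Finset.mem_filter.mp hjb).1).2
    exact hab (by rw [h1] at h2; exact (Option.some_inj.mp h2))
  rw [hbU, Finset.sum_biUnion hdisj]
  have hstep : ∀ a ∈ Γ.usingUnions t,
      ∑ i ∈ (Γ.part a).filter (fun j => t ∈ Γ.T j),
        Γ.C t / (((Γ.usingUnions t).card : ℝ) * ((Γ.usingMates i t).card : ℝ))
        = Γ.C t / ((Γ.usingUnions t).card : ℝ) := by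
    intro a ha
    have hta : t ∈ Γ.unionSections a := (Finset.mem_filter.mp ha).2
    obtain ⟨j, hjp, hjt⟩ := Finset.mem_biUnion.mp hta
    exact inner_const_sum Γ ⟨j, Finset.mem_filter.mpr ⟨hjp, hjt⟩⟩
  rw [Finset.sum_congr rfl hstep, Finset.sum_const, nsmul_eq_mul]
  have hk : (Γ.usingUnions t).Nonempty := by
    obtain ⟨i, hiN, hit⟩ := hcov t ht
    obtain ⟨a, haM, hua⟩ := hu i hiN
    exact ⟨a, Finset.mem_filter.mpr ⟨haM,
      Finset.mem_biUnion.mpr ⟨i, Finset.mem_filter.mpr ⟨hiN, hua⟩, hit⟩⟩⟩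
  have hk' : (0 : ℝ) < ((Γ.usingUnions t).card : ℝ) := by
    exact_mod_cast Finset.card_pos.mpr hk
  rw [mul_div_cancel₀ _ hk'.ne']

lemma sum_part_eq (Γ : GHP 𝒩 𝒦 ℳ) {a : ℳ} :
    ∑ i ∈ Γ.part a, Γ.owen i
      = ∑ t ∈ Γ.unionSections a, Γ.C t / ((Γ.usingUnions t).card : ℝ) := by
  unfold owen
  rw [aux_sum_swap (Γ.part a) (Γ.unionSections a) Γ.T
    (fun i hi => Finset.subset_biUnion_of_mem Γ.T hi) _]
  refine Finset.sum_congr rfl fun t ht => ?_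
  obtain ⟨j, hjp, hjt⟩ := Finset.mem_biUnion.mp ht
  exact inner_const_sum Γ ⟨j, Finset.mem_filter.mpr ⟨hjp, hjt⟩⟩

lemma owen_restrict (Γ : GHP 𝒩 𝒦 ℳ) (hv : Γ.Valid) {i : 𝒩} (hi : i ∈ Γ.N) :
    (Γ.restrict (Γ.T i)).owen i = Γ.owen i := by
  obtain ⟨hT, hT2, hcov, hC0, hC1, hu, hu2, hM⟩ := hv
  set K' := Γ.T i with hK'
  set Γ' := Γ.restrict K' with hΓ'
  have hNmem : ∀ j, j ∈ Γ'.N ↔ j ∈ Γ.N ∧ (Γ.T j ∩ K').Nonempty := by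
    intro j; exact Finset.mem_filter
  have hiN' : i ∈ Γ'.N := (hNmem i).mpr ⟨hi, by rw [hK', Finset.inter_self]; exact (hT i hi).1⟩
  have hu' : ∀ j ∈ Γ'.N, Γ'.u j = Γ.u j := by
    intro j hj
    show (if j ∈ Γ.N.filter (fun k => (Γ.T k ∩ K').Nonempty) then Γ.u j else none) = Γ.u j
    exact if_pos hj
  have hT' : ∀ j ∈ Γ'.N, Γ'.T j = Γ.T j ∩ K' := by
    intro j hj
    show (if (Γ.T j ∩ K').Nonempty then Γ.T j ∩ K' else ∅) = Γ.T j ∩ K'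
    exact if_pos ((hNmem j).mp hj).2
  have hTi : Γ'.T i = Γ.T i := by
    rw [hT' i hiN', hK', Finset.inter_self]
  unfold owen
  rw [hTi]
  refine Finset.sum_congr rfl fun t ht => ?_
  have htK' : t ∈ K' := by rw [hK']; exact ht
  have hCt : Γ'.C t = Γ.C t := by
    show (if t ∈ K' then Γ.C t else 0) = Γ.C t
    exact if_pos htK'
  have hmemN'' : ∀ j, t ∈ Γ.T j → j ∈ Γ.N → j ∈ Γ'.N := by
    intro j hjt hjN
    exact (hNmem j).mpr ⟨hjN, ⟨t, Finset.mem_inter.mpr ⟨hjt, htK'⟩⟩⟩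
  have hMates : Γ'.usingMates i t = Γ.usingMates i t := by
    ext j
    simp only [usingMates, Finset.mem_filter]
    constructor
    · rintro ⟨⟨hjN', hju⟩, hjt⟩
      have hjN : j ∈ Γ.N := ((hNmem j).mp hjN').1
      refine ⟨⟨hjN, ?_⟩, ?_⟩
      · rw [← hu' j hjN', hju, hu' i hiN']
      · rw [hT' j hjN'] at hjt
        exact (Finset.mem_inter.mp hjt).1
    · rintro ⟨⟨hjN, hju⟩, hjt⟩
      have hjN' : j ∈ Γ'.N := hmemN'' j hjt hjN
      refine ⟨⟨hjN', ?_⟩, ?_⟩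
      · rw [hu' j hjN', hu' i hiN', hju]
      · rw [hT' j hjN']
        exact Finset.mem_inter.mpr ⟨hjt, htK'⟩
  have hUnions : Γ'.usingUnions t = Γ.usingUnions t := by
    ext a
    simp only [usingUnions, unionSections, Finset.mem_filter, Finset.mem_biUnion]
    constructor
    · rintro ⟨haM', j, hjp, hjt⟩
      obtain ⟨hjN', hju⟩ := Finset.mem_filter.mp hjp
      have hjN : j ∈ Γ.N := ((hNmem j).mp hjN').1
      have haM : a ∈ Γ.M := (Finset.mem_filter.mp haM').1
      rw [hu' j hjN'] at hju
      refine ⟨haM, j, Finset.mem_filter.mpr ⟨hjN, hju⟩, ?_⟩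
      rw [hT' j hjN'] at hjt
      exact (Finset.mem_inter.mp hjt).1
    · rintro ⟨haM, j, hjp, hjt⟩
      obtain ⟨hjN, hju⟩ := Finset.mem_filter.mp hjp
      have hjN' : j ∈ Γ'.N := hmemN'' j hjt hjN
      have haM' : a ∈ Γ'.M := by
        show a ∈ Γ.M.filter _
        exact Finset.mem_filter.mpr ⟨haM, ⟨j, Finset.mem_filter.mpr ⟨hjN', hju⟩⟩⟩
      refine ⟨haM', j, Finset.mem_filter.mpr ⟨hjN', by rw [hu' j hjN']; exact hju⟩, ?_⟩
      rw [hT' j hjN']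
      exact Finset.mem_inter.mpr ⟨hjt, htK'⟩
  rw [hCt, hMates, hUnions]

end GHP


/-- the Owen value on generalized highway problems with a
coalitional structure satisfies (PO), (ETPA), (ETPU) and (IIOC). -/
theorem owen_satisfies_PO_ETPA_ETPU_IIOC
    {𝒩 𝒦 ℳ : Type*} [DecidableEq 𝒩] [DecidableEq 𝒦] [DecidableEq ℳ] :
    -- (PO)
    (∀ Γ : GHP 𝒩 𝒦 ℳ, Γ.Valid → ∑ i ∈ Γ.N, Γ.owen i = ∑ t ∈ Γ.K, Γ.C t) ∧
    -- (ETPA)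
    (∀ Γ : GHP 𝒩 𝒦 ℳ, Γ.Valid → ∀ a ∈ Γ.M, ∀ i ∈ Γ.part a, ∀ j ∈ Γ.part a,
      Γ.T i = Γ.T j → Γ.owen i = Γ.owen j) ∧
    -- (ETPU)
    (∀ Γ : GHP 𝒩 𝒦 ℳ, Γ.Valid → ∀ a ∈ Γ.M, ∀ b ∈ Γ.M,
      Γ.unionSections a = Γ.unionSections b →
      ∑ i ∈ Γ.part a, Γ.owen i = ∑ i ∈ Γ.part b, Γ.owen i) ∧
    -- (IIOC)
    (∀ Γ Γ' : GHP 𝒩 𝒦 ℳ, Γ.Valid → Γ'.Valid → ∀ i, i ∈ Γ.N → i ∈ Γ'.N →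
      Γ.restrict (Γ.T i) = Γ'.restrict (Γ'.T i) → Γ.owen i = Γ'.owen i) := by
  refine ⟨?_, ?_, ?_, ?_⟩
  · -- PO
    intro Γ hv
    unfold owen
    rw [aux_sum_swap Γ.N Γ.K Γ.T (fun i hi => (hv.1 i hi).2) _]
    exact Finset.sum_congr rfl fun t ht => sum_usingAgents Γ hv ht
  · -- ETPA
    intro Γ hv a ha i hip j hjp hTij
    have hui : Γ.u i = some a := (Finset.mem_filter.mp hip).2
    have huj : Γ.u j = some a := (Finset.mem_filter.mp hjp).2
    unfold owen
    rw [hTij]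
    refine Finset.sum_congr rfl fun t ht => ?_
    rw [usingMates_eq Γ hui t, usingMates_eq Γ huj t]
  · -- ETPU
    intro Γ hv a ha b hb hab
    rw [sum_part_eq Γ, sum_part_eq Γ, hab]
  · -- IIOC
    intro Γ Γ' hv hv' i hi hi' h
    rw [← owen_restrict Γ hv hi, ← owen_restrict Γ' hv' hi', h]
end

section
/- If a solution σ on generalized highway problems with a coalitional structure satisfies Pareto optimality, equal treatment of unions, and coalitional independence of outside changes, then the total payment of each union a equals the Shapley value of that union in the quotient game: Σ_{i∈P_a} σ_i(Γ,P) = Σ_{t∈T(P_a)} C(t)/|{b : t ∈ T(P_b)}|. -/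
open Finset

open GHP

namespace GHP

variable {𝒩 𝒦 ℳ : Type*} [DecidableEq 𝒩] [DecidableEq 𝒦] [DecidableEq ℳ]

lemma mem_part' {Γ : GHP 𝒩 𝒦 ℳ} {a : ℳ} {i : 𝒩} :
    i ∈ Γ.part a ↔ i ∈ Γ.N ∧ Γ.u i = some a := Finset.mem_filter

lemma T_subset_unionSections {Γ : GHP 𝒩 𝒦 ℳ} {a : ℳ} {i : 𝒩} (hi : i ∈ Γ.part a) :
    Γ.T i ⊆ Γ.unionSections a := Finset.subset_biUnion_of_mem _ hi

lemma unionSections_subset_K {Γ : GHP 𝒩 𝒦 ℳ} (h : Γ.Valid) (a : ℳ) :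
    Γ.unionSections a ⊆ Γ.K := by
  intro t ht
  rw [unionSections, Finset.mem_biUnion] at ht
  obtain ⟨i, hi, hti⟩ := ht
  exact (h.1 i (mem_part'.mp hi).1).2 hti

lemma mem_restrict_N {Γ : GHP 𝒩 𝒦 ℳ} {K' : Finset 𝒦} {i : 𝒩} :
    i ∈ (Γ.restrict K').N ↔ i ∈ Γ.N ∧ (Γ.T i ∩ K').Nonempty := Finset.mem_filter

lemma restrict_T_of_mem {Γ : GHP 𝒩 𝒦 ℳ} {K' : Finset 𝒦} {i : 𝒩}
    (h : (Γ.T i ∩ K').Nonempty) : (Γ.restrict K').T i = Γ.T i ∩ K' := if_pos h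

lemma restrict_u_of_mem {Γ : GHP 𝒩 𝒦 ℳ} {K' : Finset 𝒦} {i : 𝒩}
    (h : i ∈ (Γ.restrict K').N) : (Γ.restrict K').u i = Γ.u i := if_pos h

lemma restrict_T_subset (Γ : GHP 𝒩 𝒦 ℳ) (K' : Finset 𝒦) (i : 𝒩) :
    (Γ.restrict K').T i ⊆ K' := by
  show (if (Γ.T i ∩ K').Nonempty then Γ.T i ∩ K' else ∅) ⊆ K'
  split
  · exact Finset.inter_subset_right
  · exact Finset.empty_subset _

lemma part_restrict (Γ : GHP 𝒩 𝒦 ℳ) (K' : Finset 𝒦) (b : ℳ) :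
    (Γ.restrict K').part b
      = Γ.N.filter (fun i => (Γ.T i ∩ K').Nonempty ∧ Γ.u i = some b) := by
  ext i
  simp only [part, Finset.mem_filter]
  constructor
  · rintro ⟨hiN, hu⟩
    obtain ⟨hiΓ, hne⟩ := mem_restrict_N.mp hiN
    rw [restrict_u_of_mem hiN] at hu
    exact ⟨hiΓ, hne, hu⟩
  · rintro ⟨hiΓ, hne, hu⟩
    have hiN : i ∈ (Γ.restrict K').N := mem_restrict_N.mpr ⟨hiΓ, hne⟩
    exact ⟨hiN, by rw [restrict_u_of_mem hiN]; exact hu⟩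

lemma unionSections_restrict (Γ : GHP 𝒩 𝒦 ℳ) (K' : Finset 𝒦) (b : ℳ) :
    (Γ.restrict K').unionSections b = Γ.unionSections b ∩ K' := by
  ext t
  simp only [unionSections, Finset.mem_biUnion, Finset.mem_inter, part_restrict,
    Finset.mem_filter]
  constructor
  · rintro ⟨i, ⟨hiΓ, hne, hu⟩, ht⟩
    rw [restrict_T_of_mem hne, Finset.mem_inter] at ht
    exact ⟨⟨i, mem_part'.mpr ⟨hiΓ, hu⟩, ht.1⟩, ht.2⟩
  · rintro ⟨⟨i, hi, ht⟩, htK⟩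
    obtain ⟨hiΓ, hu⟩ := mem_part'.mp hi
    have hne : (Γ.T i ∩ K').Nonempty := ⟨t, Finset.mem_inter.mpr ⟨ht, htK⟩⟩
    refine ⟨i, ⟨hiΓ, hne, hu⟩, ?_⟩
    rw [restrict_T_of_mem hne]
    exact Finset.mem_inter.mpr ⟨ht, htK⟩

lemma mem_M_restrict {Γ : GHP 𝒩 𝒦 ℳ} {K' : Finset 𝒦} {b : ℳ} :
    b ∈ (Γ.restrict K').M ↔ b ∈ Γ.M ∧ ((Γ.restrict K').part b).Nonempty := by
  rw [part_restrict]
  show b ∈ Γ.M.filter _ ↔ _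
  rw [Finset.mem_filter, Finset.filter_filter]

lemma valid_restrict {Γ : GHP 𝒩 𝒦 ℳ} (h : Γ.Valid) {K' : Finset 𝒦}
    (hused : ∀ t ∈ K', ∃ i ∈ Γ.N, t ∈ Γ.T i) : (Γ.restrict K').Valid := by
  refine ⟨?_, ?_, ?_, ?_, ?_, ?_, ?_, ?_⟩
  · intro i hi
    obtain ⟨hiΓ, hne⟩ := mem_restrict_N.mp hi
    rw [restrict_T_of_mem hne]
    exact ⟨hne, Finset.inter_subset_right⟩
  · intro i hi
    by_cases hne : (Γ.T i ∩ K').Nonempty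
    · by_cases hiΓ : i ∈ Γ.N
      · exact absurd (mem_restrict_N.mpr ⟨hiΓ, hne⟩) hi
      · rw [h.2.1 i hiΓ, Finset.empty_inter] at hne
        exact absurd hne (by simp)
    · exact if_neg hne
  · intro t ht
    obtain ⟨i, hiΓ, hti⟩ := hused t ht
    have hne : (Γ.T i ∩ K').Nonempty := ⟨t, Finset.mem_inter.mpr ⟨hti, ht⟩⟩
    refine ⟨i, mem_restrict_N.mpr ⟨hiΓ, hne⟩, ?_⟩
    rw [restrict_T_of_mem hne]
    exact Finset.mem_inter.mpr ⟨hti, ht⟩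
  · intro t
    show (0:ℝ) ≤ if t ∈ K' then Γ.C t else 0
    split
    · exact h.2.2.2.1 t
    · exact le_refl 0
  · intro t ht
    exact if_neg ht
  · intro i hi
    obtain ⟨hiΓ, hne⟩ := mem_restrict_N.mp hi
    obtain ⟨b, hb, hu⟩ := h.2.2.2.2.2.1 i hiΓ
    refine ⟨b, mem_M_restrict.mpr ⟨hb, ⟨i, ?_⟩⟩, ?_⟩
    · rw [part_restrict, Finset.mem_filter]
      exact ⟨hiΓ, hne, hu⟩
    · rw [restrict_u_of_mem hi]
      exact hu
  · intro i hi
    exact if_neg hi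
  · intro b hb
    exact (mem_M_restrict.mp hb).2

lemma GHP.ext' {A B : GHP 𝒩 𝒦 ℳ} (hN : A.N = B.N) (hK : A.K = B.K) (hC : A.C = B.C)
    (hT : A.T = B.T) (hM : A.M = B.M) (hu : A.u = B.u) : A = B := by
  cases A; cases B; simp_all

lemma restrict_restrict_self (Γ : GHP 𝒩 𝒦 ℳ) (K' : Finset 𝒦) :
    (Γ.restrict K').restrict K' = Γ.restrict K' := by
  set Δ := Γ.restrict K' with hΔ
  have hTcap : ∀ i, Δ.T i ∩ K' = Δ.T i :=
    fun i => Finset.inter_eq_left.mpr (restrict_T_subset Γ K' i)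
  have hTne : ∀ i ∈ Δ.N, (Δ.T i).Nonempty := by
    intro i hi
    obtain ⟨hiΓ, hne⟩ := mem_restrict_N.mp hi
    rw [restrict_T_of_mem hne]
    exact hne
  have hN : Δ.N.filter (fun i => (Δ.T i ∩ K').Nonempty) = Δ.N := by
    apply Finset.filter_eq_self.mpr
    intro i hi
    rw [hTcap]
    exact hTne i hi
  refine GHP.ext' hN rfl ?_ ?_ ?_ ?_
  · funext t
    show (if t ∈ K' then Δ.C t else 0) = Δ.C t
    by_cases ht : t ∈ K'
    · rw [if_pos ht]
    · rw [if_neg ht]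
      exact (if_neg ht).symm
  · funext i
    show (if (Δ.T i ∩ K').Nonempty then Δ.T i ∩ K' else ∅) = Δ.T i
    rw [hTcap]
    by_cases hne : (Δ.T i).Nonempty
    · rw [if_pos hne]
    · rw [if_neg hne, Finset.not_nonempty_iff_eq_empty.mp hne]
  · show Δ.M.filter _ = Δ.M
    apply Finset.filter_eq_self.mpr
    intro b hb
    obtain ⟨hbΓ, hpart⟩ := mem_M_restrict.mp (show b ∈ (Γ.restrict K').M from hb)
    obtain ⟨i, hi⟩ := hpart
    obtain ⟨hiN, hui⟩ := mem_part'.mp hi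
    refine ⟨i, Finset.mem_filter.mpr ⟨?_, hui⟩⟩
    rw [show (Δ.N.filter fun i => (Δ.T i ∩ K').Nonempty) = Δ.N from hN]
    exact hiN
  · funext i
    show (if i ∈ Δ.N.filter (fun i => (Δ.T i ∩ K').Nonempty) then Δ.u i else none) = Δ.u i
    rw [hN]
    by_cases hi : i ∈ Δ.N
    · rw [if_pos hi]
    · rw [if_neg hi]
      exact (show Δ.u i = none from if_neg hi).symm

lemma part_restrict_self {Γ : GHP 𝒩 𝒦 ℳ} (hV : Γ.Valid) (a : ℳ) :
    (Γ.restrict (Γ.unionSections a)).part a = Γ.part a := by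
  rw [part_restrict]
  ext i
  rw [Finset.mem_filter, mem_part']
  constructor
  · rintro ⟨hiN, _, hu⟩
    exact ⟨hiN, hu⟩
  · rintro ⟨hiN, hu⟩
    have hiP : i ∈ Γ.part a := mem_part'.mpr ⟨hiN, hu⟩
    have hsub := T_subset_unionSections hiP
    have hne := (hV.1 i hiN).1
    exact ⟨hiN, by rwa [Finset.inter_eq_left.mpr hsub], hu⟩

lemma usingUnions_restrict {Γ : GHP 𝒩 𝒦 ℳ} {K' : Finset 𝒦} {t : 𝒦} (ht : t ∈ K') :
    (Γ.restrict K').usingUnions t = Γ.usingUnions t := by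
  ext b
  rw [usingUnions, usingUnions, Finset.mem_filter, Finset.mem_filter,
    unionSections_restrict, Finset.mem_inter, mem_M_restrict]
  constructor
  · rintro ⟨⟨hb, _⟩, htb, _⟩
    exact ⟨hb, htb⟩
  · rintro ⟨hb, htb⟩
    have htb' := htb
    rw [unionSections, Finset.mem_biUnion] at htb'
    obtain ⟨i, hi, hti⟩ := htb'
    obtain ⟨hiN, hu⟩ := mem_part'.mp hi
    refine ⟨⟨hb, ⟨i, ?_⟩⟩, htb, ht⟩
    rw [part_restrict, Finset.mem_filter]
    exact ⟨hiN, ⟨t, Finset.mem_inter.mpr ⟨hti, ht⟩⟩, hu⟩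

lemma sum_parts {Γ : GHP 𝒩 𝒦 ℳ} (hV : Γ.Valid) (f : 𝒩 → ℝ) :
    ∑ b ∈ Γ.M, ∑ i ∈ Γ.part b, f i = ∑ i ∈ Γ.N, f i := by
  rw [← Finset.sum_biUnion]
  · apply Finset.sum_congr _ (fun _ _ => rfl)
    ext i
    simp only [Finset.mem_biUnion, mem_part']
    constructor
    · rintro ⟨b, _, hi, _⟩
      exact hi
    · intro hi
      obtain ⟨b, hb, hu⟩ := hV.2.2.2.2.2.1 i hi
      exact ⟨b, hb, hi, hu⟩
  · intro b _ c _ hbc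
    simp only [Function.onFun, Finset.disjoint_left, mem_part']
    rintro i ⟨_, hib⟩ ⟨_, hic⟩
    rw [hib] at hic
    exact hbc (Option.some.inj hic)

end GHP


/-- if a solution satisfies (PO), (ETPU) and (CIOC), then the
total payment of each union `a` equals the Shapley value of that union in the
quotient game, `Σ_{t∈T(P_a)} C(t)/|{b : t ∈ T(P_b)}|`. -/
theorem union_totals_are_quotient_shapley
    {𝒩 𝒦 ℳ : Type*} [DecidableEq 𝒩] [DecidableEq 𝒦] [DecidableEq ℳ]
    (σ : GHP 𝒩 𝒦 ℳ → 𝒩 → ℝ)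
    -- (PO)
    (hPO : ∀ Γ : GHP 𝒩 𝒦 ℳ, Γ.Valid → ∑ i ∈ Γ.N, σ Γ i = ∑ t ∈ Γ.K, Γ.C t)
    -- (ETPU)
    (hETPU : ∀ Γ : GHP 𝒩 𝒦 ℳ, Γ.Valid → ∀ a ∈ Γ.M, ∀ b ∈ Γ.M,
      Γ.unionSections a = Γ.unionSections b →
      ∑ i ∈ Γ.part a, σ Γ i = ∑ i ∈ Γ.part b, σ Γ i)
    -- (CIOC)
    (hCIOC : ∀ Γ Γ' : GHP 𝒩 𝒦 ℳ, Γ.Valid → Γ'.Valid → ∀ a, a ∈ Γ.M → a ∈ Γ'.M →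
      Γ.restrict (Γ.unionSections a) = Γ'.restrict (Γ'.unionSections a) →
      ∑ i ∈ Γ.part a, σ Γ i = ∑ i ∈ Γ'.part a, σ Γ' i) :
    ∀ Γ : GHP 𝒩 𝒦 ℳ, Γ.Valid → ∀ a ∈ Γ.M,
      ∑ i ∈ Γ.part a, σ Γ i
        = ∑ t ∈ Γ.unionSections a, Γ.C t / ((Γ.usingUnions t).card : ℝ) := by
  suffices h : ∀ n (Γ : GHP 𝒩 𝒦 ℳ), Γ.K.card = n → Γ.Valid → ∀ a ∈ Γ.M,
      ∑ i ∈ Γ.part a, σ Γ i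
        = ∑ t ∈ Γ.unionSections a, Γ.C t / ((Γ.usingUnions t).card : ℝ) by
    intro Γ hV a ha
    exact h Γ.K.card Γ rfl hV a ha
  intro n
  induction n using Nat.strong_induction_on with
  | _ n IH =>
  intro Γ hn hV a ha
  have key : ∀ b ∈ Γ.M, Γ.unionSections b ≠ Γ.K →
      ∑ i ∈ Γ.part b, σ Γ i
        = ∑ t ∈ Γ.unionSections b, Γ.C t / ((Γ.usingUnions t).card : ℝ) := by
    intro b hb hne
    set S := Γ.unionSections b with hS
    have hSsub : S ⊆ Γ.K := unionSections_subset_K hV b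
    have hcard : S.card < n := by
      subst hn
      exact Finset.card_lt_card (hSsub.ssubset_of_ne hne)
    set Γ' := Γ.restrict S with hΓ'
    have hused : ∀ t ∈ S, ∃ i ∈ Γ.N, t ∈ Γ.T i := by
      intro t ht
      rw [hS, unionSections, Finset.mem_biUnion] at ht
      obtain ⟨i, hi, hti⟩ := ht
      exact ⟨i, (mem_part'.mp hi).1, hti⟩
    have hV' : Γ'.Valid := valid_restrict hV hused
    have hb' : b ∈ Γ'.M := by
      rw [hΓ', mem_M_restrict]
      refine ⟨hb, ?_⟩
      rw [hS, part_restrict_self hV b]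
      exact hV.2.2.2.2.2.2.2 b hb
    have hUS' : Γ'.unionSections b = S := by
      rw [hΓ', hS, unionSections_restrict, Finset.inter_self]
    have hres : Γ.restrict (Γ.unionSections b) = Γ'.restrict (Γ'.unionSections b) := by
      rw [hUS', hΓ', ← hS]
      exact (restrict_restrict_self Γ S).symm
    have h1 := hCIOC Γ Γ' hV hV' b hb hb' hres
    have h2 := IH S.card hcard Γ' rfl hV' b hb'
    rw [h1, h2, hUS']
    apply Finset.sum_congr rfl
    intro t ht
    have hC : Γ'.C t = Γ.C t := if_pos ht
    have hU : Γ'.usingUnions t = Γ.usingUnions t := usingUnions_restrict ht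
    rw [hC, hU]
  by_cases hKa : Γ.unionSections a = Γ.K
  · -- every union either uses everything or, by `key`, gets its formula value
    set g : 𝒦 → ℝ := fun t => Γ.C t / ((Γ.usingUnions t).card : ℝ) with hg
    set p : ℳ → Prop := fun b => Γ.unionSections b = Γ.K with hp
    set F := Γ.M.filter p with hF
    have haF : a ∈ F := Finset.mem_filter.mpr ⟨ha, hKa⟩
    have hUne : ∀ t ∈ Γ.K, (Γ.usingUnions t).Nonempty := by
      intro t ht
      obtain ⟨i, hiN, hti⟩ := hV.2.2.1 t ht
      obtain ⟨b, hb, hu⟩ := hV.2.2.2.2.2.1 i hiN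
      refine ⟨b, Finset.mem_filter.mpr ⟨hb, ?_⟩⟩
      rw [unionSections, Finset.mem_biUnion]
      exact ⟨i, mem_part'.mpr ⟨hiN, hu⟩, hti⟩
    have hAne : ∀ t ∈ Γ.K, ((Γ.usingUnions t).card : ℝ) ≠ 0 := by
      intro t ht
      exact_mod_cast Finset.card_ne_zero_of_mem (hUne t ht).choose_spec
    have hFsub : ∀ t ∈ Γ.K, F ⊆ Γ.usingUnions t := by
      intro t ht b hbF
      obtain ⟨hbM, hbK⟩ := Finset.mem_filter.mp hbF
      refine Finset.mem_filter.mpr ⟨hbM, ?_⟩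
      rw [hbK]
      exact ht
    have hsplit : (∑ b ∈ Γ.M.filter p, ∑ i ∈ Γ.part b, σ Γ i)
        + (∑ b ∈ Γ.M.filter (fun b => ¬ p b), ∑ i ∈ Γ.part b, σ Γ i)
        = ∑ t ∈ Γ.K, Γ.C t := by
      rw [Finset.sum_filter_add_sum_filter_not, sum_parts hV]
      exact hPO Γ hV
    have hFsum : ∑ b ∈ Γ.M.filter p, ∑ i ∈ Γ.part b, σ Γ i
        = (F.card : ℝ) * ∑ i ∈ Γ.part a, σ Γ i := by
      rw [Finset.sum_congr rfl (fun b hb => by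
        obtain ⟨hbM, hbK⟩ := Finset.mem_filter.mp hb
        exact (hETPU Γ hV a ha b hbM (by rw [hKa, hbK])).symm)]
      rw [Finset.sum_const, nsmul_eq_mul, hF]
    have hcardfilter : ∀ t ∈ Γ.K,
        ((Γ.M.filter (fun b => ¬ p b)).filter (fun b => t ∈ Γ.unionSections b)).card
          = (Γ.usingUnions t).card - F.card := by
      intro t ht
      have heq : (Γ.M.filter (fun b => ¬ p b)).filter (fun b => t ∈ Γ.unionSections b)
          = Γ.usingUnions t \ F := by
        ext b
        simp only [Finset.mem_filter, Finset.mem_sdiff, usingUnions, hF]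
        tauto
      rw [heq, Finset.card_sdiff_of_subset (hFsub t ht)]
    have hrest : ∑ b ∈ Γ.M.filter (fun b => ¬ p b), ∑ i ∈ Γ.part b, σ Γ i
        = ∑ t ∈ Γ.K, (((Γ.usingUnions t).card : ℝ) - (F.card : ℝ)) * g t := by
      have h1 : ∀ b ∈ Γ.M.filter (fun b => ¬ p b),
          ∑ i ∈ Γ.part b, σ Γ i = ∑ t ∈ Γ.K, if t ∈ Γ.unionSections b then g t else 0 := by
        intro b hb
        obtain ⟨hbM, hbne⟩ := Finset.mem_filter.mp hb
        rw [key b hbM hbne, ← Finset.sum_filter, Finset.filter_mem_eq_inter,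
          Finset.inter_eq_right.mpr (unionSections_subset_K hV b)]
      rw [Finset.sum_congr rfl h1, Finset.sum_comm]
      apply Finset.sum_congr rfl
      intro t ht
      rw [← Finset.sum_filter, Finset.sum_const, nsmul_eq_mul, hcardfilter t ht,
        Nat.cast_sub (Finset.card_le_card (hFsub t ht))]
    have hCt : ∀ t ∈ Γ.K,
        (((Γ.usingUnions t).card : ℝ) - (F.card : ℝ)) * g t
          = Γ.C t - (F.card : ℝ) * g t := by
      intro t ht
      rw [sub_mul]
      congr 1
      rw [hg, mul_comm, div_mul_cancel₀ _ (hAne t ht)]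
    rw [Finset.sum_congr rfl hCt, Finset.sum_sub_distrib, ← Finset.mul_sum] at hrest
    rw [hFsum, hrest] at hsplit
    have hfeq : (F.card : ℝ) * (∑ i ∈ Γ.part a, σ Γ i) = (F.card : ℝ) * ∑ t ∈ Γ.K, g t := by
      linarith [hsplit]
    have hfne : (F.card : ℝ) ≠ 0 := by
      exact_mod_cast Finset.card_ne_zero_of_mem haF
    have := mul_left_cancel₀ hfne hfeq
    rw [this, hKa]
  · exact key a ha hKa
end

section
/- The Shapley-Tijs value on generalized highway problems with a coalitional structure, defined for i ∈ P_a by Λ_i = c^e(i) if no section is shared among agents, and Λ_i = c^e(i) + (Ψ_a − c^e(a))·c^s(i)/Σ_{j∈P_a} c^s(j) otherwise (where Ψ_a = Σ_{t∈T(P_a)} C(t)/|𝒜_t| and c^e(a) = Σ_{j∈P_a} c^e(j)), satisfies Pareto optimality: Σ_{i∈N} Λ_i = Σ_{t∈K} C(t). -/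
open Finset

lemma sum_swap_card {I K : Type*} [Fintype I] [Fintype K] [DecidableEq K]
    (S : I → Finset K) (g : K → ℝ) :
    ∑ i : I, ∑ t ∈ S i, g t
      = ∑ t : K, ((Finset.univ.filter fun i => t ∈ S i).card : ℝ) * g t := by
  have h : ∀ i : I, ∑ t ∈ S i, g t = ∑ t : K, if t ∈ S i then g t else 0 := by
    intro i
    rw [← Finset.univ_inter (S i), ← Finset.sum_ite_mem]
    simp
  simp_rw [h]
  rw [Finset.sum_comm]
  refine Finset.sum_congr rfl fun t _ => ?_
  rw [Finset.sum_ite, Finset.sum_const_zero, add_zero, Finset.sum_const,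
    nsmul_eq_mul]

/-- the Shapley-Tijs value of a generalized highway problem with
a priori unions satisfies Pareto optimality: the payments sum to the total cost
`Σ_{t∈K} C(t)`. -/
theorem shapley_tijs_pareto_optimal
    {N K M : Type*} [Fintype N] [DecidableEq N] [Fintype K] [DecidableEq K]
    [Fintype M] [DecidableEq M]
    (C : K → ℝ) (hC : ∀ t, 0 ≤ C t)
    (T : N → Finset K) (hT : ∀ i, (T i).Nonempty)
    (hK : ∀ t : K, ∃ i, t ∈ T i)
    (Pp : M → Finset N)
    (hdis : ∀ a b : M, a ≠ b → Disjoint (Pp a) (Pp b))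
    (hcov : ∀ i : N, ∃ a : M, i ∈ Pp a)
    (hne : ∀ a : M, (Pp a).Nonempty)
    (part : N → M) (hpart : ∀ i : N, i ∈ Pp (part i)) :
    -- shared/exclusive classification and costs
    let Nt : K → Finset N := fun t => Finset.univ.filter (fun j => t ∈ T j)
    let ce : N → ℝ := fun i => ∑ t ∈ (T i).filter (fun t => (Nt t).card = 1), C t
    let cs : N → ℝ := fun i => ∑ t ∈ (T i).filter (fun t => 1 < (Nt t).card), C t
    let Ks : Finset K := Finset.univ.filter (fun t => 1 < (Nt t).card)
    -- Shapley value of union `a` in the quotient game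
    let 𝒜 : K → Finset M := fun t => Finset.univ.filter (fun b => t ∈ (Pp b).biUnion T)
    let Ψ : M → ℝ := fun a => ∑ t ∈ (Pp a).biUnion T, C t / ((𝒜 t).card : ℝ)
    let cea : M → ℝ := fun a => ∑ j ∈ Pp a, ce j
    -- the Shapley-Tijs value
    let Λ : N → ℝ := fun i =>
      if Ks = ∅ then ce i
      else ce i + (Ψ (part i) - cea (part i)) * cs i / ∑ j ∈ Pp (part i), cs j
    -- positive denominators whenever shared sections exist
    ∀ _hden : (Ks ≠ ∅ → ∀ a : M, 0 < ∑ j ∈ Pp a, cs j),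
    ∑ i : N, Λ i = ∑ t : K, C t := by
  intro Nt ce cs Ks 𝒜 Ψ cea Λ hden
  -- membership in unions determines `part`
  have hpa : ∀ (a : M) (i : N), i ∈ Pp a ↔ part i = a := by
    intro a i
    constructor
    · intro hi
      by_contra h
      exact Finset.disjoint_left.mp (hdis _ _ h) (hpart i) hi
    · rintro rfl; exact hpart i
  -- grouping sums by unions
  have hgroup : ∀ f : N → ℝ, ∑ i : N, f i = ∑ a : M, ∑ i ∈ Pp a, f i := by
    intro f
    have h : ∀ a : M, Pp a = Finset.univ.filter (fun i => part i = a) := by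
      intro a; ext i; simp [hpa a i]
    simp_rw [h]
    exact (Finset.sum_fiberwise Finset.univ part f).symm
  -- 𝒜 t is nonempty
  have hA : ∀ t : K, 0 < (𝒜 t).card := by
    intro t
    obtain ⟨i, hi⟩ := hK t
    refine Finset.card_pos.mpr ⟨part i, ?_⟩
    simp only [𝒜, Finset.mem_filter, Finset.mem_univ, true_and, Finset.mem_biUnion]
    exact ⟨i, hpart i, hi⟩
  by_cases hKs : Ks = ∅
  · -- every section is exclusive
    have hcard : ∀ t : K, (Nt t).card = 1 := by
      intro t
      have h1 : ¬ (1 < (Nt t).card) := by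
        intro h
        have : t ∈ Ks := by simp [Ks, h]
        simp [hKs] at this
      have h2 : 0 < (Nt t).card := by
        obtain ⟨i, hi⟩ := hK t
        exact Finset.card_pos.mpr ⟨i, by simp [Nt, hi]⟩
      omega
    have hce : ∀ i : N, ce i = ∑ t ∈ T i, C t := by
      intro i
      simp only [ce]
      rw [Finset.filter_true_of_mem (fun t _ => hcard t)]
    simp only [Λ, if_pos hKs]
    simp_rw [hce]
    rw [sum_swap_card T C]
    refine Finset.sum_congr rfl fun t _ => ?_
    have : (Finset.univ.filter fun i => t ∈ T i) = Nt t := rfl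
    rw [this, hcard t]
    simp
  · -- shared sections exist
    simp only [Λ, if_neg hKs]
    rw [Finset.sum_add_distrib]
    have hsum2 : ∑ i : N, (Ψ (part i) - cea (part i)) * cs i / ∑ j ∈ Pp (part i), cs j
        = ∑ a : M, (Ψ a - cea a) := by
      rw [hgroup]
      refine Finset.sum_congr rfl fun a _ => ?_
      have hpt : ∀ i ∈ Pp a, part i = a := fun i hi => (hpa a i).1 hi
      rw [Finset.sum_congr rfl (fun i hi => by rw [hpt i hi])]
      have hden' := hden hKs a
      rw [← Finset.sum_div, ← Finset.mul_sum, mul_div_assoc,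
        div_self (ne_of_gt hden'), mul_one]
    rw [hsum2]
    have hcea : ∑ a : M, cea a = ∑ i : N, ce i := (hgroup ce).symm
    have hPsi : ∑ a : M, Ψ a = ∑ t : K, C t := by
      simp only [Ψ]
      rw [sum_swap_card (fun a => (Pp a).biUnion T) (fun t => C t / ((𝒜 t).card : ℝ))]
      refine Finset.sum_congr rfl fun t _ => ?_
      have h𝒜 : (Finset.univ.filter fun a : M => t ∈ (Pp a).biUnion T) = 𝒜 t := rfl
      rw [h𝒜]
      field_simp [ne_of_gt (hA t)]
    simp only [Finset.sum_sub_distrib] at *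
    rw [hPsi, hcea]
    ring
end
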